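/- arXiv:2207.02588 — 10 statements merged into one kernel-verified Lean document; each statement's English description precedes it below -/
import Mathlib

section
/- Let X_t be an irreducible continuous-time Markov chain on a finite set V with jump rates R(x,y), stationary distribution π, and holding rates λ. For nonempty disjoint subsets A, B of V define the capacity Cap(A,B) = Σ_{x∈A} π(x) λ(x) P_x[H_B < H_A^+], where H_B is the hitting time of B and H_A^+ the return time to A. Define the conductance of an edge c(x,y) = π(x) R(x,y), and for a self-avoiding path γ = (x_0,...,x_m) with R(x_i,x_{i+1})>0 set c(γ) = min_i c(x_i,x_{i+1}); let c(A,B) be the maximum of c(γ) over self-avoiding paths γ from A to B. Then, assuming the chain is reversible, there exists a constant C_1 ≥ 1, depending only on the number of edges |E|, such that C_1^{-1} ≤ Cap(A,B)/c(A,B) ≤ C_1 for all nonempty disjoint A, B ⊂ V. -/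
open Finset Filter Topology

noncomputable section

/-- Generator of a continuous-time Markov chain with jump rates `R`. -/
def gen {V : Type*} [Fintype V] (R : V → V → ℝ) (f : V → ℝ) (x : V) : ℝ :=
  ∑ y, R x y * (f y - f x)

/-- Generator of a chain restricted to the subset `W` (e.g. a trace process). -/
def genOn {V : Type*} [Fintype V] [DecidableEq V] (W : Finset V) (R : V → V → ℝ)
    (f : V → ℝ) (x : V) : ℝ :=
  ∑ y ∈ W, R x y * (f y - f x)

/-- Detailed balance (reversibility) of `π` for the rates `R`. -/
def Reversible {V : Type*} (R : V → V → ℝ) (π : V → ℝ) : Prop :=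
  ∀ x y, π x * R x y = π y * R y x

/-- Stationarity of `π` for the rates `R`. -/
def Stationary {V : Type*} [Fintype V] (R : V → V → ℝ) (π : V → ℝ) : Prop :=
  ∀ y, ∑ x, π x * R x y = π y * ∑ z, R y z

/-- Irreducibility of the rates `R`. -/
def Irred {V : Type*} (R : V → V → ℝ) : Prop :=
  ∀ x y : V, Relation.ReflTransGen (fun a b => 0 < R a b) x y

/-- `h` is the equilibrium potential `h(x) = P_x[H_A < H_B]` : it equals `1` on `A`,
`0` on `B` and is harmonic elsewhere. -/
def IsEqPotential {V : Type*} [Fintype V] (R : V → V → ℝ) (A B : Finset V)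
    (h : V → ℝ) : Prop :=
  (∀ x ∈ A, h x = 1) ∧ (∀ x ∈ B, h x = 0) ∧ ∀ x, x ∉ A → x ∉ B → gen R h x = 0

/-- The capacity `Cap(A,B) = ∑_{x∈A} π(x) λ(x) P_x[H_B < H_A⁺]`, expressed through the
equilibrium potential `h = h_{A,B}` as `-∑_{x∈A} π(x) (L h)(x)`. -/
def capFor {V : Type*} [Fintype V] (R : V → V → ℝ) (π : V → ℝ) (A : Finset V)
    (h : V → ℝ) : ℝ :=
  ∑ x ∈ A, π x * (-(gen R h x))

/-- The set of costs `c(γ) = min_i π(x_i) R(x_i,x_{i+1})` over self-avoiding paths `γ`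
from `A` to `B` along edges with positive rate. -/
def pathCosts {V : Type*} (R : V → V → ℝ) (π : V → ℝ) (A B : Finset V) : Set ℝ :=
  { r | ∃ γ : List V, γ.Nodup ∧ γ.Chain' (fun a b => 0 < R a b) ∧
      (∃ x ∈ A, γ.head? = some x) ∧ (∃ y ∈ B, γ.getLast? = some y) ∧
      IsLeast {c | c ∈ List.zipWith (fun a b => π a * R a b) γ γ.tail} r }

namespace Stmt0Aux

lemma zipWith_forall_of_chain' {α β : Type*} {P : α → α → Prop} {f : α → α → β} {Q : β → Prop}
    (hf : ∀ a b, P a b → Q (f a b)) :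
    ∀ l : List α, l.Chain' P → ∀ c ∈ List.zipWith f l l.tail, Q c
  | [], _, c, hc => by simp at hc
  | [a], _, c, hc => by simp at hc
  | a :: b :: t, hch, c, hc => by
    simp only [List.Chain', List.isChain_cons_cons] at hch
    rw [List.tail_cons, List.zipWith_cons_cons, List.mem_cons] at hc
    rcases hc with h | h
    · exact h ▸ hf a b hch.1
    · exact zipWith_forall_of_chain' hf (b :: t) hch.2 c h

lemma zipWith_eq_map_zip {α β : Type*} (f : α → α → β) :
    ∀ l l' : List α, List.zipWith f l l' = (l.zip l').map fun p => f p.1 p.2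
  | [], _ => by simp
  | _ :: _, [] => by simp
  | a :: l, b :: l' => by
    simp [List.zipWith_cons_cons, List.zip_cons_cons, zipWith_eq_map_zip f l l']

lemma zipWith_sub_sum {α : Type*} (g : α → ℝ) :
    ∀ (l : List α) (a b : α), l.head? = some a → l.getLast? = some b →
      (List.zipWith (fun x y => g x - g y) l l.tail).sum = g a - g b
  | [], a, b, ha, _ => by simp at ha
  | [x], a, b, ha, hb => by
    simp only [List.head?_cons, Option.some.injEq] at ha
    simp only [List.getLast?_singleton, Option.some.injEq] at hb
    subst ha; subst hb; simp
  | x :: y :: t, a, b, ha, hb => by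
    simp only [List.head?_cons, Option.some.injEq] at ha
    subst ha
    have hb' : (y :: t).getLast? = some b := by
      rwa [List.getLast?_cons_cons] at hb
    have ih := zipWith_sub_sum g (y :: t) y b rfl hb'
    rw [List.tail_cons] at ih
    rw [List.tail_cons, List.zipWith_cons_cons, List.sum_cons, ih]
    ring

variable {V : Type*} [Fintype V]

/-- The (double-counted) Dirichlet form. -/
def Dsum (R : V → V → ℝ) (π : V → ℝ) (g k : V → ℝ) : ℝ :=
  ∑ x, ∑ y, π x * R x y * (g x - g y) * (k x - k y)

lemma two_T (R : V → V → ℝ) (π : V → ℝ) (hrev : Reversible R π) (g k : V → ℝ) :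
    2 * (∑ x, π x * g x * (-(gen R k x))) = Dsum R π g k := by
  have hT : (∑ x, π x * g x * (-(gen R k x)))
      = ∑ x, ∑ y, π x * R x y * g x * (k x - k y) := by
    refine Finset.sum_congr rfl fun x _ => ?_
    rw [gen, ← Finset.sum_neg_distrib, Finset.mul_sum]
    exact Finset.sum_congr rfl fun y _ => by ring
  have hswap : (∑ x, ∑ y, π x * R x y * g x * (k x - k y))
      = ∑ x, ∑ y, π x * R x y * g y * (k y - k x) := by
    rw [Finset.sum_comm]
    refine Finset.sum_congr rfl fun a _ => Finset.sum_congr rfl fun b _ => ?_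
    rw [← hrev a b]
  have : Dsum R π g k = (∑ x, ∑ y, π x * R x y * g x * (k x - k y))
      + ∑ x, ∑ y, π x * R x y * g y * (k y - k x) := by
    rw [Dsum, ← Finset.sum_add_distrib]
    refine Finset.sum_congr rfl fun x _ => ?_
    rw [← Finset.sum_add_distrib]
    exact Finset.sum_congr rfl fun y _ => by ring
  rw [this, hT, ← hswap]; ring

lemma Dsum_self_nonneg (R : V → V → ℝ) (π : V → ℝ) (hR : ∀ x y, 0 ≤ R x y)
    (hπ : ∀ x, 0 < π x) (g : V → ℝ) : 0 ≤ Dsum R π g g := by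
  refine Finset.sum_nonneg fun x _ => Finset.sum_nonneg fun y _ => ?_
  have h1 : 0 ≤ π x * R x y * ((g x - g y) * (g x - g y)) :=
    mul_nonneg (mul_nonneg (hπ x).le (hR x y)) (mul_self_nonneg _)
  nlinarith [h1]

lemma cap_eq_Dsum (R : V → V → ℝ) (π : V → ℝ) (hrev : Reversible R π)
    (A B : Finset V) (h : V → ℝ) (hh : IsEqPotential R A B h) :
    capFor R π A h = Dsum R π h h / 2 := by
  have key : capFor R π A h = ∑ x, π x * h x * (-(gen R h x)) := by
    rw [capFor]
    calc ∑ x ∈ A, π x * (-(gen R h x))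
        = ∑ x ∈ A, π x * h x * (-(gen R h x)) :=
          Finset.sum_congr rfl fun x hx => by rw [hh.1 x hx]; ring
      _ = ∑ x, π x * h x * (-(gen R h x)) := by
          refine Finset.sum_subset (Finset.subset_univ A) fun x _ hx => ?_
          by_cases hxB : x ∈ B
          · rw [hh.2.1 x hxB]; ring
          · rw [hh.2.2 x hx hxB]; ring
  rw [key, eq_div_iff (by norm_num : (2:ℝ) ≠ 0), mul_comm]
  exact two_T R π hrev h h

lemma Dsum_le_of_potential (R : V → V → ℝ) (π : V → ℝ) (hrev : Reversible R π)
    (hR : ∀ x y, 0 ≤ R x y) (hπ : ∀ x, 0 < π x)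
    (A B : Finset V) (h f : V → ℝ) (hh : IsEqPotential R A B h)
    (hfA : ∀ x ∈ A, f x = 1) (hfB : ∀ x ∈ B, f x = 0) :
    Dsum R π h h ≤ Dsum R π f f := by
  set g : V → ℝ := fun x => f x - h x with hg
  have hT0 : ∑ x, π x * g x * (-(gen R h x)) = 0 := by
    refine Finset.sum_eq_zero fun x _ => ?_
    by_cases hxA : x ∈ A
    · simp [hg, hfA x hxA, hh.1 x hxA]
    · by_cases hxB : x ∈ B
      · simp [hg, hfB x hxB, hh.2.1 x hxB]
      · simp [hh.2.2 x hxA hxB]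
  have hgh : Dsum R π g h = 0 := by rw [← two_T R π hrev, hT0]; ring
  have hdecomp : Dsum R π f f
      = Dsum R π h h + 2 * Dsum R π g h + Dsum R π g g := by
    have hpt : ∀ x y : V, π x * R x y * (f x - f y) * (f x - f y)
        = π x * R x y * (h x - h y) * (h x - h y)
          + 2 * (π x * R x y * (g x - g y) * (h x - h y))
          + π x * R x y * (g x - g y) * (g x - g y) := by
      intro x y; simp only [hg]; ring
    rw [Dsum, Dsum, Dsum, Dsum, Finset.mul_sum, ← Finset.sum_add_distrib,
      ← Finset.sum_add_distrib]
    refine Finset.sum_congr rfl fun x _ => ?_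
    rw [Finset.mul_sum, ← Finset.sum_add_distrib, ← Finset.sum_add_distrib]
    exact Finset.sum_congr rfl fun y _ => hpt x y
  have hgg := Dsum_self_nonneg R π hR hπ g
  rw [hdecomp, hgh]; linarith

lemma reach_path (R : V → V → ℝ) (π : V → ℝ) (hrev : Reversible R π)
    (hπ : ∀ x, 0 < π x) (A B : Finset V) (cAB : ℝ) (hc : 0 < cAB)
    (a b : V) (ha : a ∈ A) (hb : b ∈ B) (hab : a ≠ b)
    (hreach : Relation.ReflTransGen (fun u v => cAB < π u * R u v) a b) :
    ∃ r ∈ pathCosts R π A B, cAB < r := by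
  classical
  let G : SimpleGraph V :=
    { Adj := fun x y => x ≠ y ∧ cAB < π x * R x y
      symm := by
        constructor
        intro x y hxy
        exact ⟨hxy.1.symm, by rw [hrev y x]; exact hxy.2⟩
      loopless := ⟨fun x hx => hx.1 rfl⟩ }
  have hGgen : ∀ y, Relation.ReflTransGen (fun u v => cAB < π u * R u v) a y →
      Relation.ReflTransGen G.Adj a y := by
    intro y hy
    induction hy with
    | refl => exact .refl
    | @tail c d _ hstep ih =>
      by_cases hcd : c = d
      · exact hcd ▸ ih
      · exact ih.tail ⟨hcd, hstep⟩
  have hG : Relation.ReflTransGen G.Adj a b := hGgen b hreach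
  obtain ⟨w⟩ := (SimpleGraph.reachable_iff_reflTransGen a b).mpr hG
  set p := w.toPath with hp
  set γ := p.1.support with hγ
  have hnodup : γ.Nodup := p.2.support_nodup
  have hchainAdj : γ.Chain' G.Adj := SimpleGraph.Walk.isChain_adj_support p.1
  have hAdjR : ∀ x y : V, G.Adj x y → 0 < R x y := by
    intro x y hxy
    have h2 : 0 < π x * R x y := hc.trans hxy.2
    nlinarith [hπ x]
  have hhead : γ.head? = some a := by
    rw [hγ, SimpleGraph.Walk.support_eq_cons]; rfl
  have hlast : γ.getLast? = some b := by
    rw [List.getLast?_eq_getLast (l := γ) (by simp [hγ])]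
    exact congrArg some (SimpleGraph.Walk.getLast_support p.1)
  set l := List.zipWith (fun x y => π x * R x y) γ γ.tail with hl
  have hlne : l ≠ [] := by
    have hlen : γ.tail ≠ [] := by
      intro htail
      rcases hd : γ with _ | ⟨x, t⟩
      · rw [hd] at hhead; simp at hhead
      · rw [hd] at htail; simp at htail
        rw [hd, htail] at hhead hlast
        simp at hhead hlast
        exact hab (hhead ▸ hlast ▸ rfl)
    rcases hd : γ with _ | ⟨x, t⟩
    · rw [hd] at hhead; simp at hhead
    · rcases ht : t with _ | ⟨y, t'⟩
      · rw [hd, ht] at hlen; simp at hlen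
      · simp [hl, hd, ht]
  have hlF : l.toFinset.Nonempty := by
    obtain ⟨e, he⟩ := List.exists_mem_of_ne_nil l hlne
    exact ⟨e, List.mem_toFinset.mpr he⟩
  set r := l.toFinset.min' hlF with hr
  have hrmem : r ∈ l := List.mem_toFinset.mp (l.toFinset.min'_mem hlF)
  have hrleast : IsLeast {c | c ∈ l} r :=
    ⟨hrmem, fun c hcmem => l.toFinset.min'_le c (List.mem_toFinset.mpr hcmem)⟩
  have hbig : ∀ c ∈ l, cAB < c :=
    zipWith_forall_of_chain' (fun x y (hxy : G.Adj x y) => hxy.2) γ hchainAdj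
  refine ⟨r, ⟨γ, hnodup, hchainAdj.imp hAdjR, ⟨a, ha, hhead⟩, ⟨b, hb, hlast⟩, hrleast⟩,
    hbig r hrmem⟩


end Stmt0Aux

open Stmt0Aux in
set_option maxHeartbeats 2000000 in
/-- for reversible irreducible chains on a finite set `V` there is a constant
`C₁ ≥ 1`, depending only on `V` (hence only on the number of edges), such that
`C₁⁻¹ ≤ Cap(A,B)/c(A,B) ≤ C₁` for all nonempty disjoint `A, B ⊆ V`. -/
theorem stmt0 (V : Type*) [Fintype V] [DecidableEq V] :
    ∃ C₁ : ℝ, 1 ≤ C₁ ∧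
      ∀ (R : V → V → ℝ) (π : V → ℝ),
        (∀ x y, 0 ≤ R x y) → (∀ x, 0 < π x) → Irred R →
        Stationary R π → Reversible R π →
        ∀ A B : Finset V, A.Nonempty → B.Nonempty → Disjoint A B →
        ∀ h : V → ℝ, IsEqPotential R A B h →
        ∀ cAB : ℝ, IsGreatest (pathCosts R π A B) cAB →
          C₁⁻¹ ≤ capFor R π A h / cAB ∧ capFor R π A h / cAB ≤ C₁ := by
  classical
  refine ⟨2 * (Fintype.card V : ℝ) ^ 2 + 1,
    by nlinarith [sq_nonneg ((Fintype.card V : ℝ))], ?_⟩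
  intro R π hR hπ _irred _stat hrev A B hA hB hABd h hh cAB hcg
  set n : ℝ := (Fintype.card V : ℝ) with hn
  have hn0 : 0 ≤ n := by rw [hn]; positivity
  obtain ⟨γ, hnodup, hchain, ⟨a0, ha0, hhead⟩, ⟨b0, hb0, hlast⟩, hleast⟩ := hcg.1
  set pairs := γ.zip γ.tail with hpairs
  have hzipmk : γ.zip γ.tail = List.zipWith Prod.mk γ γ.tail := rfl
  have hmemP : ∀ p ∈ pairs, 0 < R p.1 p.2 := by
    rw [hpairs, hzipmk]
    exact zipWith_forall_of_chain' (Q := fun p : V × V => 0 < R p.1 p.2)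
      (fun a b hab => hab) γ hchain
  have hcost_mem : ∀ p ∈ pairs, π p.1 * R p.1 p.2 ∈
      List.zipWith (fun a b => π a * R a b) γ γ.tail := by
    intro p hp
    rw [zipWith_eq_map_zip]
    exact List.mem_map_of_mem hp
  have hcABle : ∀ p ∈ pairs, cAB ≤ π p.1 * R p.1 p.2 :=
    fun p hp => hleast.2 (hcost_mem p hp)
  have hcABpos : 0 < cAB := by
    have hmem : cAB ∈ List.zipWith (fun a b => π a * R a b) γ γ.tail := hleast.1
    rw [zipWith_eq_map_zip] at hmem
    obtain ⟨p, hp, hpe⟩ := List.mem_map.mp hmem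
    have hpos := mul_pos (hπ p.1) (hmemP p hp)
    exact hpe ▸ hpos
  have ha0b0 : a0 ≠ b0 := fun he => (Finset.disjoint_left.mp hABd ha0) (he ▸ hb0)
  have hpairs_ne : pairs ≠ [] := by
    rcases hd : γ with _ | ⟨x, t⟩
    · rw [hd] at hhead; simp at hhead
    · rcases ht : t with _ | ⟨y, t'⟩
      · rw [hd, ht] at hhead hlast
        simp at hhead hlast
        exact (ha0b0 (hhead ▸ hlast ▸ rfl)).elim
      · simp [hpairs, hd, ht]
  set L := pairs.length with hL
  have hL1 : 0 < L := List.length_pos_iff.mpr hpairs_ne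
  have hLpos : (0:ℝ) < (L:ℝ) := by exact_mod_cast hL1
  have hLn : (L:ℝ) ≤ n := by
    have h1 : L ≤ γ.length := by
      rw [hL, hpairs, List.length_zip]; exact min_le_left _ _
    have h2 : γ.length ≤ Fintype.card V := hnodup.length_le_card
    rw [hn]; exact_mod_cast h1.trans h2
  set values := pairs.map (fun p => h p.1 - h p.2) with hv
  have hsum1 : values.sum = 1 := by
    have htel := zipWith_sub_sum h γ a0 b0 hhead hlast
    rw [zipWith_eq_map_zip] at htel
    rw [hh.1 a0 ha0, hh.2.1 b0 hb0] at htel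
    rw [hv, hpairs, htel]; ring
  have hvne : values ≠ [] := by
    rw [hv]; exact fun hcon => hpairs_ne (List.map_eq_nil_iff.mp hcon)
  have hvF : values.toFinset.Nonempty := by
    obtain ⟨e, he⟩ := List.exists_mem_of_ne_nil values hvne
    exact ⟨e, List.mem_toFinset.mpr he⟩
  set M := values.toFinset.max' hvF with hM
  have hMmem : M ∈ values := List.mem_toFinset.mp (values.toFinset.max'_mem hvF)
  have hsle : values.sum ≤ values.length • M :=
    List.sum_le_card_nsmul values M
      (fun x hx => Finset.le_max' _ x (List.mem_toFinset.mpr hx))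
  have hlenv : values.length = L := by rw [hv, List.length_map, hL]
  have h1LM : (1:ℝ) ≤ (L:ℝ) * M := by
    have : (1:ℝ) ≤ values.length • M := hsum1 ▸ hsle
    rwa [hlenv, nsmul_eq_mul] at this
  obtain ⟨p, hp, hpM⟩ := List.mem_map.mp (hv ▸ hMmem)
  set d := h p.1 - h p.2 with hd
  have hdM : d = M := hpM
  have hdpos : 0 < d := by nlinarith [h1LM, hLpos, hdM]
  have h1Ld : (1:ℝ) ≤ (L:ℝ) * d := by rw [hdM]; exact h1LM
  set ce := π p.1 * R p.1 p.2 with hce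
  have hcele : cAB ≤ ce := hcABle p hp
  have hcap : capFor R π A h = Dsum R π h h / 2 := cap_eq_Dsum R π hrev A B h hh
  have hnn : ∀ x y : V, 0 ≤ π x * R x y * (h x - h y) * (h x - h y) := fun x y => by
    nlinarith [mul_nonneg (mul_nonneg (hπ x).le (hR x y)) (mul_self_nonneg (h x - h y))]
  have hterm_le_D : ce * d * d ≤ Dsum R π h h := by
    calc ce * d * d = π p.1 * R p.1 p.2 * (h p.1 - h p.2) * (h p.1 - h p.2) := by
          rw [hce, hd]
      _ ≤ ∑ y, π p.1 * R p.1 y * (h p.1 - h y) * (h p.1 - h y) :=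
          Finset.single_le_sum (fun y _ => hnn p.1 y) (Finset.mem_univ p.2)
      _ ≤ Dsum R π h h :=
          Finset.single_le_sum
            (f := fun x => ∑ y, π x * R x y * (h x - h y) * (h x - h y))
            (fun x _ => Finset.sum_nonneg fun y _ => hnn x y) (Finset.mem_univ p.1)
  have hDcap : Dsum R π h h = 2 * capFor R π A h := by rw [hcap]; ring
  have hcap0 : 0 ≤ capFor R π A h := by
    rw [hcap]; linarith [Dsum_self_nonneg R π hR hπ h]
  -- lower bound : cAB ≤ 2 L² cap
  have hlow : cAB ≤ 2 * (L:ℝ)^2 * capFor R π A h := by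
    have f3 : ce * d * d ≤ 2 * capFor R π A h := hDcap ▸ hterm_le_D
    have s0 : (1:ℝ) ≤ ((L:ℝ) * d) * ((L:ℝ) * d) := by nlinarith [h1Ld]
    have s1 : cAB ≤ cAB * (((L:ℝ) * d) * ((L:ℝ) * d)) := by nlinarith [s0, hcABpos]
    have s3 : cAB * d * d ≤ ce * d * d := by
      nlinarith [mul_nonneg (sub_nonneg.mpr hcele) (mul_self_nonneg d)]
    have s4 : ((L:ℝ) * (L:ℝ)) * (cAB * d * d) ≤ ((L:ℝ) * (L:ℝ)) * (ce * d * d) :=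
      mul_le_mul_of_nonneg_left s3 (by positivity)
    have s5 : ((L:ℝ) * (L:ℝ)) * (ce * d * d) ≤ ((L:ℝ) * (L:ℝ)) * (2 * capFor R π A h) :=
      mul_le_mul_of_nonneg_left f3 (by positivity)
    calc cAB ≤ cAB * (((L:ℝ) * d) * ((L:ℝ) * d)) := s1
      _ = ((L:ℝ) * (L:ℝ)) * (cAB * d * d) := by ring
      _ ≤ ((L:ℝ) * (L:ℝ)) * (2 * capFor R π A h) := s4.trans s5
      _ = 2 * (L:ℝ)^2 * capFor R π A h := by ring
  -- upper bound : cap ≤ n² cAB / 2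
  set Srel : V → V → Prop := fun u v => cAB < π u * R u v with hSrel
  set S : V → Prop := fun y => ∃ x ∈ A, Relation.ReflTransGen Srel x y with hS
  set f : V → ℝ := fun x => if S x then 1 else 0 with hf
  have hfpos : ∀ z, S z → f z = 1 := by
    intro z hz; simp only [hf]; exact if_pos hz
  have hfneg : ∀ z, ¬ S z → f z = 0 := by
    intro z hz; simp only [hf]; exact if_neg hz
  have hfA : ∀ x ∈ A, f x = 1 := by
    intro x hx
    exact hfpos x ⟨x, hx, Relation.ReflTransGen.refl⟩
  have hSnotB : ∀ x ∈ B, ¬ S x := by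
    rintro x hxB ⟨a, haA, hre⟩
    have hne : a ≠ x := fun he => Finset.disjoint_left.mp hABd haA (he ▸ hxB)
    obtain ⟨r, hrP, hrgt⟩ :=
      reach_path R π hrev hπ A B cAB hcABpos a x haA hxB hne hre
    exact absurd (hcg.2 hrP) (not_le.mpr hrgt)
  have hfB : ∀ x ∈ B, f x = 0 := fun x hx => hfneg x (hSnotB x hx)
  have hclosed : ∀ x y, S x → cAB < π x * R x y → S y := by
    rintro x y ⟨a, haA, hre⟩ hlt
    exact ⟨a, haA, hre.tail hlt⟩
  have hterm : ∀ x y : V, π x * R x y * (f x - f y) * (f x - f y) ≤ cAB := by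
    intro x y
    by_cases hSx : S x <;> by_cases hSy : S y
    · rw [hfpos x hSx, hfpos y hSy]
      simpa using hcABpos.le
    · have hle : π x * R x y ≤ cAB :=
        le_of_not_gt (fun hgt => hSy (hclosed x y hSx hgt))
      rw [hfpos x hSx, hfneg y hSy]
      nlinarith [hle]
    · have hle : π x * R x y ≤ cAB := by
        refine le_of_not_gt (fun hgt => hSx (hclosed y x hSy ?_))
        rw [← hrev x y]; exact hgt
      rw [hfneg x hSx, hfpos y hSy]
      nlinarith [hle]
    · rw [hfneg x hSx, hfneg y hSy]
      simpa using hcABpos.le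
  have hDf : Dsum R π f f ≤ n * (n * cAB) := by
    have hinner : ∀ x : V, ∑ y, π x * R x y * (f x - f y) * (f x - f y) ≤ n * cAB := by
      intro x
      have := Finset.sum_le_card_nsmul Finset.univ
        (fun y => π x * R x y * (f x - f y) * (f x - f y)) cAB (fun y _ => hterm x y)
      rwa [Finset.card_univ, nsmul_eq_mul, ← hn] at this
    calc Dsum R π f f ≤ ∑ _x : V, n * cAB := Finset.sum_le_sum fun x _ => hinner x
      _ = n * (n * cAB) := by
          rw [Finset.sum_const, Finset.card_univ, nsmul_eq_mul, ← hn]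
  have hupper : capFor R π A h ≤ n * (n * cAB) / 2 := by
    have hle := Dsum_le_of_potential R π hrev hR hπ A B h f hh hfA hfB
    rw [hcap]; linarith
  -- conclusion
  have hC1pos : (0:ℝ) < 2 * n ^ 2 + 1 := by positivity
  constructor
  · rw [le_div_iff₀ hcABpos, inv_mul_le_iff₀ hC1pos]
    have hL2 : (L:ℝ)^2 ≤ n^2 := by nlinarith [hLn, hLpos]
    calc cAB ≤ 2 * (L:ℝ)^2 * capFor R π A h := hlow
      _ ≤ (2 * n ^ 2 + 1) * capFor R π A h := by nlinarith [hL2, hcap0]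
  · rw [div_le_iff₀ hcABpos]
    have : n * (n * cAB) / 2 ≤ (2 * n ^ 2 + 1) * cAB := by
      nlinarith [mul_nonneg (mul_nonneg hn0 hn0) hcABpos.le, hcABpos.le]
    linarith
end
end

section
/- Let X_t be an irreducible reversible continuous-time Markov chain on a finite set V with stationary measure π. Let h_{A,B}(x) = P_x[H_A < H_B] be the equilibrium potential between two nonempty disjoint subsets A, B of V. Then there exists a finite constant C_0, depending only on the number of edges, such that for every x ∉ A ∪ B, h_{A,B}(x)^2 ≤ C_0 · Cap(A,B)/Cap({x},B). -/
open Finset Filter Topology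

noncomputable section

/-- The Dirichlet form `D(f) = ⟨f, (−L)f⟩_π`. -/
def dirichlet {V : Type*} [Fintype V] (R : V → V → ℝ) (π : V → ℝ) (f : V → ℝ) : ℝ :=
  ∑ x, π x * (f x * (-(gen R f x)))

namespace Stmt1Aux

variable {V : Type*} [Fintype V] [DecidableEq V]

/-- The Dirichlet bilinear form. -/
def bform (R : V → V → ℝ) (π : V → ℝ) (f g : V → ℝ) : ℝ :=
  ∑ x, π x * (f x * (-(gen R g x)))

lemma bform_eq_raw (R : V → V → ℝ) (π : V → ℝ) (f g : V → ℝ) :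
    bform R π f g = ∑ x, ∑ y, π x * R x y * (f x * (g x - g y)) := by
  unfold bform gen
  refine Finset.sum_congr rfl fun x _ => ?_
  rw [show π x * (f x * (-(∑ y, R x y * (g y - g x))))
      = (-(π x * f x)) * ∑ y, R x y * (g y - g x) from by ring, Finset.mul_sum]
  exact Finset.sum_congr rfl fun y _ => by ring

lemma bform_eq (R : V → V → ℝ) (π : V → ℝ) (hrev : Reversible R π) (f g : V → ℝ) :
    bform R π f g = (1/2) * ∑ x, ∑ y, π x * R x y * ((f x - f y) * (g x - g y)) := by
  have hT : (∑ x, ∑ y, π x * R x y * (f y * (g y - g x)))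
      = ∑ x, ∑ y, π x * R x y * (f x * (g x - g y)) := by
    rw [Finset.sum_comm]
    refine Finset.sum_congr rfl fun x _ => Finset.sum_congr rfl fun y _ => ?_
    rw [hrev x y]
  have hsplit : (∑ x, ∑ y, π x * R x y * ((f x - f y) * (g x - g y)))
      = (∑ x, ∑ y, π x * R x y * (f x * (g x - g y)))
        + ∑ x, ∑ y, π x * R x y * (f y * (g y - g x)) := by
    rw [← Finset.sum_add_distrib]
    refine Finset.sum_congr rfl fun x _ => ?_
    rw [← Finset.sum_add_distrib]
    exact Finset.sum_congr rfl fun y _ => by ring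
  rw [bform_eq_raw, hsplit, hT]; ring

lemma bform_sq_le (R : V → V → ℝ) (π : V → ℝ) (hR : ∀ x y, 0 ≤ R x y)
    (hπ : ∀ x, 0 < π x) (hrev : Reversible R π) (f g : V → ℝ) :
    (bform R π f g) ^ 2 ≤ bform R π f f * bform R π g g := by
  have hw : ∀ p : V × V, 0 ≤ π p.1 * R p.1 p.2 :=
    fun p => mul_nonneg (hπ p.1).le (hR p.1 p.2)
  set a : V × V → ℝ := fun p => Real.sqrt (π p.1 * R p.1 p.2) * (f p.1 - f p.2) with ha
  set b : V × V → ℝ := fun p => Real.sqrt (π p.1 * R p.1 p.2) * (g p.1 - g p.2) with hb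
  have key : ∀ (u v : V → ℝ),
      (∑ x, ∑ y, π x * R x y * ((u x - u y) * (v x - v y)))
      = ∑ p : V × V, (Real.sqrt (π p.1 * R p.1 p.2) * (u p.1 - u p.2))
          * (Real.sqrt (π p.1 * R p.1 p.2) * (v p.1 - v p.2)) := by
    intro u v
    rw [Fintype.sum_prod_type]
    refine Finset.sum_congr rfl fun x _ => Finset.sum_congr rfl fun y _ => ?_
    have : Real.sqrt (π x * R x y) * Real.sqrt (π x * R x y) = π x * R x y :=
      Real.mul_self_sqrt (hw (x, y))
    calc π x * R x y * ((u x - u y) * (v x - v y))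
        = (Real.sqrt (π x * R x y) * Real.sqrt (π x * R x y)) * ((u x - u y) * (v x - v y)) := by
          rw [this]
      _ = _ := by ring
  have hCS : (∑ p : V × V, a p * b p) ^ 2
      ≤ (∑ p : V × V, a p ^ 2) * ∑ p : V × V, b p ^ 2 :=
    Finset.sum_mul_sq_le_sq_mul_sq Finset.univ a b
  rw [bform_eq R π hrev f g, bform_eq R π hrev f f, bform_eq R π hrev g g,
    key f g, key f f, key g g]
  have ea : (∑ p : V × V, a p * a p) = ∑ p : V × V, a p ^ 2 := by
    exact Finset.sum_congr rfl fun p _ => (sq (a p)).symm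
  have eb : (∑ p : V × V, b p * b p) = ∑ p : V × V, b p ^ 2 := by
    exact Finset.sum_congr rfl fun p _ => (sq (b p)).symm
  show (1/2 * ∑ p : V × V, a p * b p) ^ 2
      ≤ (1/2 * ∑ p : V × V, a p * a p) * (1/2 * ∑ p : V × V, b p * b p)
  rw [ea, eb]
  nlinarith [hCS]

lemma exists_edge {r : V → V → Prop} {g : V → ℝ} {x y : V}
    (hp : Relation.ReflTransGen r x y) (hne : g x ≠ g y) :
    ∃ a b, r a b ∧ g a ≠ g b := by
  induction hp with
  | refl => exact absurd rfl hne
  | @tail c d hxc hcd ih =>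
    by_cases hgc : g c = g d
    · exact ih (by rw [← hgc] at hne; exact hne)
    · exact ⟨c, d, hcd, hgc⟩

/-- Evaluation of the bilinear form against the equilibrium potential of `({x}, B)`. -/
lemma bform_eval (R : V → V → ℝ) (π : V → ℝ) (B : Finset V) (x : V) (hxB : x ∉ B)
    (h : V → ℝ) (hpot : IsEqPotential R {x} B h) (f : V → ℝ) (hfB : ∀ y ∈ B, f y = 0) :
    bform R π f h = π x * (f x * (-(gen R h x))) := by
  unfold bform
  refine Finset.sum_eq_single x (fun y _ hy => ?_) (fun hx => absurd (Finset.mem_univ x) hx)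
  by_cases hyB : y ∈ B
  · rw [hfB y hyB]; ring
  · have : gen R h y = 0 := hpot.2.2 y (by simp [hy]) hyB
    rw [this]; ring

end Stmt1Aux

open Stmt1Aux in
/-- there is a constant `C₀`, depending only on `V` (hence only on the
number of edges), such that for every reversible irreducible chain, all nonempty disjoint
`A, B` and all `x ∉ A ∪ B`, `h_{A,B}(x)² ≤ C₀ · Cap(A,B)/Cap({x},B)`, where the
capacities are expressed as Dirichlet forms of the equilibrium potentials. -/
theorem stmt1 (V : Type*) [Fintype V] [DecidableEq V] :
    ∃ C₀ : ℝ, 0 ≤ C₀ ∧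
      ∀ (R : V → V → ℝ) (π : V → ℝ),
        (∀ x y, 0 ≤ R x y) → (∀ x, 0 < π x) → Irred R →
        Stationary R π → Reversible R π →
        ∀ A B : Finset V, A.Nonempty → B.Nonempty → Disjoint A B →
        ∀ hAB : V → ℝ, IsEqPotential R A B hAB →
        ∀ x : V, x ∉ A → x ∉ B →
        ∀ hxB : V → ℝ, IsEqPotential R {x} B hxB →
          (hAB x) ^ 2 ≤ C₀ * dirichlet R π hAB / dirichlet R π hxB := by
  refine ⟨1, zero_le_one, ?_⟩
  intro R π hR hπ hirr _ hrev A B hA hB hABdis hAB hABpot x hx hxB h hpot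
  -- dirichlet = bform on the diagonal
  have hd : ∀ f : V → ℝ, dirichlet R π f = bform R π f f := fun f => rfl
  -- the capacity Cap({x},B) as dirichlet form
  have hsupp : bform R π h h = π x * (-(gen R h x)) := by
    rw [bform_eval R π B x hxB h hpot h hpot.2.1]
    rw [hpot.1 x (Finset.mem_singleton_self x)]; ring
  -- evaluation of the cross form
  have hcross : bform R π hAB h = hAB x * (π x * (-(gen R h x))) := by
    rw [bform_eval R π B x hxB h hpot hAB hABpot.2.1]; ring
  set c : ℝ := bform R π h h with hc
  -- positivity of c
  have hcpos : 0 < c := by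
    obtain ⟨b, hb⟩ := hB
    have hne : h x ≠ h b := by
      rw [hpot.1 x (Finset.mem_singleton_self x), hpot.2.1 b hb]; exact one_ne_zero
    obtain ⟨a, b', hab, hgab⟩ := exists_edge (hirr x b) hne
    rw [hc, bform_eq R π hrev h h]
    have hnn : ∀ u v : V, 0 ≤ π u * R u v * ((h u - h v) * (h u - h v)) := fun u v =>
      mul_nonneg (mul_nonneg (hπ u).le (hR u v)) (mul_self_nonneg _)
    have hterm : 0 < π a * R a b' * ((h a - h b') * (h a - h b')) :=
      mul_pos (mul_pos (hπ a) hab) (mul_self_pos.mpr (sub_ne_zero.2 hgab))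
    have h1 : π a * R a b' * ((h a - h b') * (h a - h b'))
        ≤ ∑ y, π a * R a y * ((h a - h y) * (h a - h y)) :=
      Finset.single_le_sum (fun y _ => hnn a y) (Finset.mem_univ b')
    have h2 : (∑ y, π a * R a y * ((h a - h y) * (h a - h y)))
        ≤ ∑ u, ∑ y, π u * R u y * ((h u - h y) * (h u - h y)) :=
      Finset.single_le_sum
        (fun u _ => Finset.sum_nonneg fun y _ => hnn u y) (Finset.mem_univ a)
    nlinarith
  have hCS := bform_sq_le R π hR hπ hrev hAB h
  have hcross' : bform R π hAB h = hAB x * c := by rw [hcross, ← hsupp]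
  rw [hd hAB, hd h, ← hc, one_mul, le_div_iff₀ hcpos]
  rw [hcross'] at hCS
  nlinarith [hCS, hcpos, sq_nonneg (hAB x)]
end
end

section
/- Let X_t be an irreducible continuous-time Markov chain on a finite set V, and let X^W_t denote its trace on a nonempty subset W ⊂ V (the process obtained by deleting all excursions outside W), with generator L_W. Fix V_0 ⊂ W and g : V_0 → ℝ. Let f solve Lf = 0 on V∖V_0, f = g on V_0, and let f_W solve L_W f_W = 0 on W∖V_0, f_W = g on V_0. Then f_W(x) = f(x) for all x ∈ W, and (Lf)(x) = (L_W f_W)(x) for all x ∈ V_0. -/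
open Finset Filter Topology

noncomputable section

set_option linter.unusedSectionVars false
set_option linter.unusedVariables false


section Aux
variable {V : Type*} [Fintype V] [DecidableEq V]

lemma gen_sub (R : V → V → ℝ) (a b : V → ℝ) (x : V) :
    gen R (fun z => a z - b z) x = gen R a x - gen R b x := by
  unfold gen
  rw [← Finset.sum_sub_distrib]
  exact Finset.sum_congr rfl fun y _ => by ring

lemma gen_neg (R : V → V → ℝ) (u : V → ℝ) (x : V) :
    gen R (fun z => -u z) x = -gen R u x := by
  unfold gen
  rw [← Finset.sum_neg_distrib]
  exact Finset.sum_congr rfl fun y _ => by ring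

lemma gen_sum (R : V → V → ℝ) (W : Finset V) (h : V → V → ℝ) (c : V → ℝ) (x : V) :
    gen R (fun z => ∑ y ∈ W, h z y * c y) x
      = ∑ y ∈ W, c y * gen R (fun z => h z y) x := by
  unfold gen
  have key : ∀ y' : V, R x y' * (∑ y ∈ W, h y' y * c y - ∑ y ∈ W, h x y * c y)
      = ∑ y ∈ W, c y * (R x y' * (h y' y - h x y)) := by
    intro y'
    rw [← Finset.sum_sub_distrib, Finset.mul_sum]
    exact Finset.sum_congr rfl fun y _ => by ring
  rw [Finset.sum_congr rfl fun y' _ => key y', Finset.sum_comm]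
  exact Finset.sum_congr rfl fun y _ => by rw [← Finset.mul_sum]

lemma genOn_congr (W : Finset V) (RW : V → V → ℝ) (a b : V → ℝ)
    (hab : ∀ y ∈ W, a y = b y) (x : V) (hx : x ∈ W) :
    genOn W RW a x = genOn W RW b x := by
  unfold genOn
  exact Finset.sum_congr rfl fun y hy => by rw [hab y hy, hab x hx]

lemma maxprin_le (R : V → V → ℝ) (hR : ∀ x y, 0 ≤ R x y)
    (hirr : Irred R) (B : Finset V) (hB : B.Nonempty) (u : V → ℝ)
    (h0 : ∀ x ∈ B, u x = 0) (hh : ∀ x, x ∉ B → gen R u x = 0) :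
    ∀ x, u x ≤ 0 := by
  obtain ⟨b, hb⟩ := hB
  haveI : Nonempty V := ⟨b⟩
  obtain ⟨x₀, -, hx₀⟩ := Finset.exists_max_image Finset.univ u ⟨b, Finset.mem_univ b⟩
  have hmax : ∀ y, u y ≤ u x₀ := fun y => hx₀ y (Finset.mem_univ y)
  have key : ∀ x, u x = u x₀ → x ∉ B → ∀ y, 0 < R x y → u y = u x₀ := by
    intro x hx hxB y hy
    have h1 : ∀ z ∈ Finset.univ, R x z * (u z - u x) ≤ 0 := by
      intro z _
      have h2 := hmax z
      have h3 := hR x z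
      nlinarith
    have h2 := (Finset.sum_eq_zero_iff_of_nonpos h1).mp (hh x hxB)
    have h3 := h2 y (Finset.mem_univ y)
    rcases mul_eq_zero.mp h3 with h | h
    · exact absurd h (ne_of_gt hy)
    · linarith [sub_eq_zero.mp h, hx ▸ (rfl : u x = u x)]
  have hzero : u x₀ = 0 := by
    have main : ∀ a, Relation.ReflTransGen (fun p q => 0 < R p q) a b →
        u a = u x₀ → u x₀ = 0 := by
      intro a h
      induction h using Relation.ReflTransGen.head_induction_on with
      | refl => intro ha; rw [← ha]; exact h0 b hb
      | @head p q h' h ih =>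
        intro ha
        by_cases hpB : p ∈ B
        · rw [← ha]; exact h0 p hpB
        · exact ih (key p ha hpB q h')
    exact main x₀ (hirr x₀ b) rfl
  intro x
  calc u x ≤ u x₀ := hmax x
  _ = 0 := hzero

lemma maxprin (R : V → V → ℝ) (hR : ∀ x y, 0 ≤ R x y)
    (hirr : Irred R) (B : Finset V) (hB : B.Nonempty) (u : V → ℝ)
    (h0 : ∀ x ∈ B, u x = 0) (hh : ∀ x, x ∉ B → gen R u x = 0) :
    ∀ x, u x = 0 := by
  have h1 := maxprin_le R hR hirr B hB u h0 hh
  have h2 := maxprin_le R hR hirr B hB (fun z => -u z)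
    (fun x hx => by simp [h0 x hx])
    (fun x hx => by rw [gen_neg, hh x hx]; ring)
  intro x
  have ha := h1 x
  have hb := h2 x
  linarith

lemma trace_gen (R RW : V → V → ℝ) (hRWdiag : ∀ x, RW x x = 0)
    (W : Finset V) (hm : V → V → ℝ)
    (hRW : ∀ x ∈ W, ∀ y ∈ W, x ≠ y → RW x y = R x y + ∑ z ∈ Wᶜ, R x z * hm z y)
    (hsum1 : ∀ z, ∑ y ∈ W, hm z y = 1)
    (f : V → ℝ) (hHf : ∀ z, ∑ y ∈ W, hm z y * f y = f z)
    (x : V) (hx : x ∈ W) :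
    genOn W RW f x = gen R f x := by
  have step1 : genOn W RW f x
      = ∑ y ∈ W, (R x y + ∑ z ∈ Wᶜ, R x z * hm z y) * (f y - f x) := by
    unfold genOn
    refine Finset.sum_congr rfl fun y hy => ?_
    by_cases hxy : x = y
    · subst hxy; simp [hRWdiag]
    · rw [hRW x hx y hy hxy]
  rw [step1]
  calc ∑ y ∈ W, (R x y + ∑ z ∈ Wᶜ, R x z * hm z y) * (f y - f x)
      = ∑ y ∈ W, (R x y * (f y - f x) + ∑ z ∈ Wᶜ, R x z * (hm z y * (f y - f x))) := by
        refine Finset.sum_congr rfl fun y _ => ?_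
        rw [add_mul, Finset.sum_mul]
        congr 1
        exact Finset.sum_congr rfl fun z _ => by ring
    _ = ∑ y ∈ W, R x y * (f y - f x)
        + ∑ y ∈ W, ∑ z ∈ Wᶜ, R x z * (hm z y * (f y - f x)) :=
        Finset.sum_add_distrib
    _ = ∑ y ∈ W, R x y * (f y - f x) + ∑ z ∈ Wᶜ, R x z * (f z - f x) := by
        congr 1
        rw [Finset.sum_comm]
        refine Finset.sum_congr rfl fun z _ => ?_
        rw [← Finset.mul_sum]
        congr 1
        rw [show ∑ y ∈ W, hm z y * (f y - f x)
            = (∑ y ∈ W, hm z y * f y) - (∑ y ∈ W, hm z y) * f x by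
          rw [Finset.sum_mul, ← Finset.sum_sub_distrib]
          exact Finset.sum_congr rfl fun y _ => by ring]
        rw [hHf z, hsum1 z, one_mul]
    _ = ∑ y, R x y * (f y - f x) := Finset.sum_add_sum_compl W _
    _ = gen R f x := rfl

end Aux


/-- let `X^W` be the trace on `W` of an irreducible chain `X`, with jump
rates `R_W(x,y) = λ(x) P_x[H_y = H⁺_W] = R(x,y) + ∑_{z∉W} R(x,z) P_z[X_{H_W} = y]`,
where the harmonic measure `hm z y = P_z[X_{H_W} = y]` solves the Dirichlet problem.
If `f` solves `Lf = 0` on `V∖V₀`, `f = g` on `V₀`, and `f_W` solves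
`L_W f_W = 0` on `W∖V₀`, `f_W = g` on `V₀`, then `f_W = f` on `W` and
`(Lf)(x) = (L_W f_W)(x)` for all `x ∈ V₀`. -/
theorem stmt3 {V : Type*} [Fintype V] [DecidableEq V]
    (R : V → V → ℝ) (hR : ∀ x y, 0 ≤ R x y) (hRdiag : ∀ x, R x x = 0)
    (hirr : Irred R)
    (W : Finset V) (hWne : W.Nonempty)
    (V₀ : Finset V) (hV₀W : V₀ ⊆ W) (hV₀ne : V₀.Nonempty)
    (hm : V → V → ℝ)
    (hm0 : ∀ x ∈ W, ∀ y, hm x y = if x = y then 1 else 0)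
    (hmh : ∀ x, x ∉ W → ∀ y, gen R (fun z => hm z y) x = 0)
    (RW : V → V → ℝ)
    (hRW : ∀ x ∈ W, ∀ y ∈ W, x ≠ y → RW x y = R x y + ∑ z ∈ Wᶜ, R x z * hm z y)
    (hRWdiag : ∀ x, RW x x = 0)
    (g f fW : V → ℝ)
    (hf0 : ∀ x ∈ V₀, f x = g x)
    (hfh : ∀ x, x ∉ V₀ → gen R f x = 0)
    (hfW0 : ∀ x ∈ V₀, fW x = g x)
    (hfWh : ∀ x ∈ W, x ∉ V₀ → genOn W RW fW x = 0) :
    (∀ x ∈ W, fW x = f x) ∧ ∀ x ∈ V₀, gen R f x = genOn W RW fW x := by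
  -- row sums of the harmonic measure are 1
  have hsum1 : ∀ z, ∑ y ∈ W, hm z y = 1 := by
    have h := maxprin R hR hirr W hWne (fun z => (∑ y ∈ W, hm z y) - 1)
      (fun x hx => by
        simp only [hm0 x hx]
        simp [Finset.sum_ite_eq, hx])
      (fun x hx => by
        rw [gen_sub]
        have h2 := gen_sum R W hm (fun _ => (1 : ℝ)) x
        simp only [mul_one] at h2
        rw [h2]
        have h3 : gen R (fun _ => (1 : ℝ)) x = 0 := by simp [gen]
        rw [h3, Finset.sum_eq_zero fun y _ => by rw [hmh x hx y, mul_zero]]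
        ring)
    intro z
    have h2 := h z
    linarith
  -- F : harmonic extension of fW
  set F : V → ℝ := fun z => ∑ y ∈ W, hm z y * fW y with hF
  have hFW : ∀ x ∈ W, F x = fW x := by
    intro x hx
    rw [hF]
    simp only [hm0 x hx, ite_mul, one_mul, zero_mul]
    simp [Finset.sum_ite_eq, hx]
  have hFh : ∀ x, x ∉ W → gen R F x = 0 := by
    intro x hx
    rw [hF, gen_sum]
    exact Finset.sum_eq_zero fun y _ => by rw [hmh x hx y, mul_zero]
  have hHF : ∀ z, ∑ y ∈ W, hm z y * F y = F z := by
    intro z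
    rw [Finset.sum_congr rfl fun y hy => by rw [hFW y hy]]
  have htrF : ∀ x ∈ W, genOn W RW F x = gen R F x :=
    fun x hx => trace_gen R RW hRWdiag W hm hRW hsum1 F hHF x hx
  -- F = f everywhere
  have hFf : ∀ x, F x = f x := by
    have h := maxprin R hR hirr V₀ hV₀ne (fun z => F z - f z)
      (fun x hx => by
        show F x - f x = 0
        rw [hFW x (hV₀W hx), hfW0 x hx, hf0 x hx]; ring)
      (fun x hx => by
        rw [gen_sub]
        by_cases hxW : x ∈ W
        · have e1 : gen R F x = 0 := by
            rw [← htrF x hxW, genOn_congr W RW F fW hFW x hxW]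
            exact hfWh x hxW hx
          rw [e1, hfh x hx]; ring
        · rw [hFh x hxW, hfh x hx]; ring)
    intro x
    have h2 := h x
    linarith
  have hFeq : F = f := funext hFf
  constructor
  · intro x hx
    rw [← hFW x hx, hFf x]
  · intro x hx
    have hxW := hV₀W hx
    rw [← hFeq, ← htrF x hxW, genOn_congr W RW F fW hFW x hxW]
end
end

section
/- Let (X^{(n)}_t) be a sequence of irreducible reversible continuous-time Markov chains on a fixed finite set V with jump rates R_n(x,y) → ℝ_0(x,y) and stationary measures π_n. Suppose x and y lie in the same equivalence class of the limiting chain (i.e., there are directed paths from x to y and from y to x along edges with ℝ_0 > 0). Then the ratio π_n(x)/π_n(y) converges to a limit in (0,∞). Moreover, for any edge (x,y) within such an equivalence class, ℝ_0(x,y) > 0 if and only if ℝ_0(y,x) > 0. -/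
open Finset Filter Topology

noncomputable section

/-- Along any directed path with positive limiting rates, the ratio of stationary
measures converges (to a nonnegative limit). -/
lemma ratio_lim {V : Type*}
    (Rn : ℕ → V → V → ℝ) (R0 : V → V → ℝ) (πn : ℕ → V → ℝ)
    (hRnn : ∀ n x y, 0 ≤ Rn n x y)
    (hπpos : ∀ n x, 0 < πn n x)
    (hrev : ∀ n, Reversible (Rn n) (πn n))
    (hlim : ∀ x y, Tendsto (fun n => Rn n x y) atTop (𝓝 (R0 x y)))
    {x y : V} (h : Relation.ReflTransGen (fun a b => 0 < R0 a b) x y) :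
    ∃ L : ℝ, 0 ≤ L ∧ Tendsto (fun n => πn n x / πn n y) atTop (𝓝 L) := by
  induction h with
  | refl =>
    refine ⟨1, zero_le_one, ?_⟩
    have : (fun n => πn n x / πn n x) = fun _ => (1 : ℝ) := by
      funext n; exact div_self (hπpos n x).ne'
    rw [this]; exact tendsto_const_nhds
  | tail hxb hbc ih =>
    rename_i b c
    obtain ⟨L, hL0, hLt⟩ := ih
    -- the edge ratio
    have hev : ∀ᶠ n in atTop, 0 < Rn n b c :=
      (hlim b c).eventually (eventually_gt_nhds hbc)
    have hcb0 : 0 ≤ R0 c b := ge_of_tendsto' (hlim c b) (fun n => hRnn n c b)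
    have hedge : Tendsto (fun n => πn n b / πn n c) atTop (𝓝 (R0 c b / R0 b c)) := by
      have hdiv : Tendsto (fun n => Rn n c b / Rn n b c) atTop
          (𝓝 (R0 c b / R0 b c)) := (hlim c b).div (hlim b c) hbc.ne'
      refine hdiv.congr' (hev.mono fun n hn => ?_)
      have hr := hrev n b c
      rw [div_eq_div_iff hn.ne' (hπpos n c).ne']
      linarith [hr]
    refine ⟨L * (R0 c b / R0 b c), mul_nonneg hL0 (div_nonneg hcb0 hbc.le), ?_⟩
    have := hLt.mul hedge
    refine this.congr fun n => ?_
    have hb := (hπpos n b).ne'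
    have hc := (hπpos n c).ne'
    field_simp

/-- for reversible chains with rates `Rn → R0`, if `x` and `y` lie in the
same equivalence class of the limiting chain (directed paths in both directions along
edges with positive limiting rate), then `πn(x)/πn(y)` converges to a limit in `(0,∞)`,
and `R0(x,y) > 0 ↔ R0(y,x) > 0`. -/
theorem stmt8 {V : Type*} [Fintype V]
    (Rn : ℕ → V → V → ℝ) (R0 : V → V → ℝ) (πn : ℕ → V → ℝ)
    (hRnn : ∀ n x y, 0 ≤ Rn n x y)
    (hirr : ∀ n, Irred (Rn n))
    (hπpos : ∀ n x, 0 < πn n x)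
    (hrev : ∀ n, Reversible (Rn n) (πn n))
    (hlim : ∀ x y, Tendsto (fun n => Rn n x y) atTop (𝓝 (R0 x y)))
    (x y : V)
    (hxy : Relation.ReflTransGen (fun a b => 0 < R0 a b) x y)
    (hyx : Relation.ReflTransGen (fun a b => 0 < R0 a b) y x) :
    (∃ a : ℝ, 0 < a ∧ Tendsto (fun n => πn n x / πn n y) atTop (𝓝 a)) ∧
    (0 < R0 x y ↔ 0 < R0 y x) := by
  obtain ⟨L1, hL10, hL1t⟩ := ratio_lim Rn R0 πn hRnn hπpos hrev hlim hxy
  obtain ⟨L2, hL20, hL2t⟩ := ratio_lim Rn R0 πn hRnn hπpos hrev hlim hyx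
  have hprod : L1 * L2 = 1 := by
    have h1 : Tendsto (fun n => (πn n x / πn n y) * (πn n y / πn n x)) atTop
        (𝓝 (L1 * L2)) := hL1t.mul hL2t
    have h2 : (fun n => (πn n x / πn n y) * (πn n y / πn n x)) = fun _ => (1 : ℝ) := by
      funext n
      have hx := (hπpos n x).ne'
      have hy := (hπpos n y).ne'
      field_simp
    rw [h2] at h1
    exact tendsto_nhds_unique h1 tendsto_const_nhds
  have hL1pos : 0 < L1 := by
    rcases hL10.lt_or_eq with h | h
    · exact h
    · exfalso; rw [← h, zero_mul] at hprod; exact one_ne_zero hprod.symm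
  have hL2pos : 0 < L2 := by
    rcases hL20.lt_or_eq with h | h
    · exact h
    · exfalso; rw [← h, mul_zero] at hprod; exact one_ne_zero hprod.symm
  refine ⟨⟨L1, hL1pos, hL1t⟩, ?_, ?_⟩
  · intro hxy0
    have key : Tendsto (fun n => Rn n y x) atTop (𝓝 (L1 * R0 x y)) := by
      have := hL1t.mul (hlim x y)
      refine this.congr fun n => ?_
      have hr := hrev n x y
      have hy := (hπpos n y).ne'
      field_simp
      linarith [hr]
    have := tendsto_nhds_unique (hlim y x) key
    rw [this]
    exact mul_pos hL1pos hxy0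
  · intro hyx0
    have key : Tendsto (fun n => Rn n x y) atTop (𝓝 (L2 * R0 y x)) := by
      have := hL2t.mul (hlim y x)
      refine this.congr fun n => ?_
      have hr := hrev n y x
      have hx := (hπpos n x).ne'
      field_simp
      linarith [hr]
    have := tendsto_nhds_unique (hlim x y) key
    rw [this]
    exact mul_pos hL2pos hyx0
end
end

section
/- Let (X^{(n)}_t) be a sequence of irreducible reversible Markov chains on a finite set V with rates R_n → ℝ_0 and stationary measures π_n. Let C be an equivalence class of the limiting chain (with respect to the relation generated by positive ℝ_0-rates in both directions), and let L^{(0)}_{T} be the generator of the limiting chain restricted to C (all jumps out of C set to zero), assumed irreducible on C, with stationary distribution ν. Then for all x ∈ C, lim_n π_n(x)/π_n(C) = ν(x), and ν is reversible for L^{(0)}_T. -/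
open Finset Filter Topology

noncomputable section

/-- reversible chains with rates `Rn → R0`; `C` an equivalence class of the
limiting chain (mutual reachability within `C` along positive limiting rates); the
restricted limiting chain on `C` is irreducible with stationary distribution `ν`.
If the ratios `πn(x)/πn(C)` converge for all `x ∈ C`, then they converge to `ν(x)`,
and `ν` is reversible for the restricted generator. -/
theorem stmt9 {V : Type*} [Fintype V] [DecidableEq V]
    (Rn : ℕ → V → V → ℝ) (R0 : V → V → ℝ) (πn : ℕ → V → ℝ)
    (hRnn : ∀ n x y, 0 ≤ Rn n x y)
    (hirr : ∀ n, Irred (Rn n))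
    (hπpos : ∀ n x, 0 < πn n x)
    (hrev : ∀ n, Reversible (Rn n) (πn n))
    (hlim : ∀ x y, Tendsto (fun n => Rn n x y) atTop (𝓝 (R0 x y)))
    (C : Finset V) (hCne : C.Nonempty)
    (hclass : ∀ x ∈ C, ∀ y ∈ C,
      Relation.ReflTransGen (fun a b => a ∈ C ∧ b ∈ C ∧ 0 < R0 a b) x y)
    -- `ν` is the (unique) stationary distribution of the restricted chain on `C`:
    (ν : V → ℝ)
    (hν0 : ∀ x, x ∉ C → ν x = 0) (hνnn : ∀ x, 0 ≤ ν x) (hν1 : ∑ x ∈ C, ν x = 1)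
    (hνstat : ∀ y ∈ C, ∑ x ∈ C, ν x * R0 x y = ν y * ∑ z ∈ C, R0 y z)
    (hνuniq : ∀ m : V → ℝ, (∀ x, 0 ≤ m x) → (∑ x ∈ C, m x = 1) →
      (∀ y ∈ C, ∑ x ∈ C, m x * R0 x y = m y * ∑ z ∈ C, R0 y z) →
      ∀ x ∈ C, m x = ν x)
    -- the ratios converge:
    (hconv : ∀ x ∈ C, ∃ a : ℝ,
      Tendsto (fun n => πn n x / ∑ z ∈ C, πn n z) atTop (𝓝 a)) :
    (∀ x ∈ C, Tendsto (fun n => πn n x / ∑ z ∈ C, πn n z) atTop (𝓝 (ν x))) ∧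
    (∀ x ∈ C, ∀ y ∈ C, ν x * R0 x y = ν y * R0 y x) := by
  classical
  set S : ℕ → ℝ := fun n => ∑ z ∈ C, πn n z with hS
  have hSpos : ∀ n, 0 < S n := fun n =>
    Finset.sum_pos (fun z _ => hπpos n z) hCne
  set r : ℕ → V → ℝ := fun n x => πn n x / S n with hr
  set a : V → ℝ := fun x => if hx : x ∈ C then (hconv x hx).choose else 0 with haDef
  have ha : ∀ x, x ∈ C → Tendsto (fun n => r n x) atTop (𝓝 (a x)) := by
    intro x hx
    simpa [haDef, dif_pos hx] using (hconv x hx).choose_spec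
  -- detailed balance for the ratios
  have hrdb : ∀ n x y, r n x * Rn n x y = r n y * Rn n y x := by
    intro n x y
    have h := hrev n x y
    have hSne : S n ≠ 0 := (hSpos n).ne'
    field_simp [hr]
    rw [hr]; dsimp only; rw [div_mul_eq_mul_div, div_mul_eq_mul_div, h]
  -- limit detailed balance
  have hadb : ∀ x ∈ C, ∀ y ∈ C, a x * R0 x y = a y * R0 y x := by
    intro x hx y hy
    have h1 : Tendsto (fun n => r n x * Rn n x y) atTop (𝓝 (a x * R0 x y)) :=
      (ha x hx).mul (hlim x y)
    have h2 : Tendsto (fun n => r n y * Rn n y x) atTop (𝓝 (a y * R0 y x)) :=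
      (ha y hy).mul (hlim y x)
    have : (fun n => r n x * Rn n x y) = fun n => r n y * Rn n y x := by
      funext n; exact hrdb n x y
    rw [this] at h1
    exact tendsto_nhds_unique h1 h2
  -- a is nonneg
  have hann : ∀ x, 0 ≤ a x := by
    intro x
    by_cases hx : x ∈ C
    · exact le_of_tendsto_of_tendsto' tendsto_const_nhds (ha x hx)
        (fun n => div_nonneg (hπpos n x).le (hSpos n).le)
    · simp [haDef, dif_neg hx]
  -- sum of a over C is 1
  have hasum : ∑ x ∈ C, a x = 1 := by
    have h1 : Tendsto (fun n => ∑ x ∈ C, r n x) atTop (𝓝 (∑ x ∈ C, a x)) :=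
      tendsto_finset_sum _ (fun x hx => ha x hx)
    have h2 : (fun n => ∑ x ∈ C, r n x) = fun _ => (1 : ℝ) := by
      funext n
      simp only [hr]
      rw [← Finset.sum_div]
      exact div_self (hSpos n).ne'
    rw [h2] at h1
    exact tendsto_nhds_unique h1 tendsto_const_nhds
  -- a is stationary
  have hastat : ∀ y ∈ C, ∑ x ∈ C, a x * R0 x y = a y * ∑ z ∈ C, R0 y z := by
    intro y hy
    rw [Finset.mul_sum]
    exact Finset.sum_congr rfl fun x hx => hadb x hx y hy
  have haν : ∀ x ∈ C, a x = ν x := hνuniq a hann hasum hastat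
  constructor
  · intro x hx
    have := ha x hx
    rwa [haν x hx] at this
  · intro x hx y hy
    rw [← haν x hx, ← haν y hy]
    exact hadb x hx y hy
end
end

section
/- Let (X^{(n)}_t) be a sequence of irreducible reversible Markov chains on a finite set V with rates R_n(x,y) → ℝ_0(x,y) and stationary measures π_n. Let x ∈ V be a transient point for the limiting chain 𝕏_t (with rates ℝ_0), and let V_j be a closed irreducible class of 𝕏_t such that the absorption probability a^{(0)}(x,j) = lim_{t→∞} Q_x[𝕏_t ∈ V_j] is positive. Then π_n(x)/π_n(V_j) → 0 as n → ∞. -/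
open Finset Filter Topology

noncomputable section

lemma prod_ratio_aux (f : ℕ → ℝ) (hf : ∀ i, f i ≠ 0) (m : ℕ) :
    ∏ i ∈ Finset.range m, f i / f (i + 1) = f 0 / f m := by
  induction m with
  | zero => simp [div_self (hf 0)]
  | succ k ih =>
    rw [Finset.prod_range_succ, ih, div_mul_div_comm,
      mul_comm (f 0) (f k), mul_div_mul_left _ _ (hf k)]

/-- reversible chains with rates `Rn → R0`; `Vj` a closed irreducible class
of the limiting chain; `x` a transient point of the limiting chain which is absorbed in
`Vj` with positive probability, i.e. there is a path `x = γ₀, …, γ_ℓ` with positive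
limiting rates, transient intermediate points, ending in `Vj`.  Then
`πn(x)/πn(Vj) → 0`. -/
theorem stmt10 {V : Type*} [Fintype V] [DecidableEq V]
    (Rn : ℕ → V → V → ℝ) (R0 : V → V → ℝ) (πn : ℕ → V → ℝ)
    (hRnn : ∀ n x y, 0 ≤ Rn n x y)
    (hirr : ∀ n, Irred (Rn n))
    (hπpos : ∀ n x, 0 < πn n x)
    (hrev : ∀ n, Reversible (Rn n) (πn n))
    (hlim : ∀ x y, Tendsto (fun n => Rn n x y) atTop (𝓝 (R0 x y)))
    (Vj : Finset V) (hVjne : Vj.Nonempty)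
    (hclosed : ∀ a ∈ Vj, ∀ b, b ∉ Vj → R0 a b = 0)
    (hclassirr : ∀ a ∈ Vj, ∀ b ∈ Vj,
      Relation.ReflTransGen (fun a b => a ∈ Vj ∧ b ∈ Vj ∧ 0 < R0 a b) a b)
    (Δ : Finset V) (hΔVj : Disjoint Δ Vj)
    -- `Δ` consists of transient states of the limiting chain:
    (hΔtrans : ∀ a ∈ Δ, ∃ b, Relation.ReflTransGen (fun u v => 0 < R0 u v) a b ∧
      ¬ Relation.ReflTransGen (fun u v => 0 < R0 u v) b a)
    (x : V) (hxΔ : x ∈ Δ)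
    -- positivity of the absorption probability `a⁰(x,j)`, witnessed by a path:
    (γ : ℕ → V) (ℓ : ℕ) (hγ0 : γ 0 = x)
    (hγrate : ∀ i < ℓ, 0 < R0 (γ i) (γ (i + 1)))
    (hγΔ : ∀ i < ℓ, γ i ∈ Δ)
    (hγend : γ ℓ ∈ Vj) :
    Tendsto (fun n => πn n x / ∑ z ∈ Vj, πn n z) atTop (𝓝 0) := by
  -- ℓ ≥ 1
  have hℓ : 0 < ℓ := by
    rcases Nat.eq_zero_or_pos ℓ with h | h
    · exact absurd (hγ0 ▸ h ▸ hγend) (Finset.disjoint_left.1 hΔVj hxΔ)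
    · exact h
  -- key : πn n x / πn n (γ ℓ) → 0
  have key : Tendsto (fun n => πn n x / πn n (γ ℓ)) atTop (𝓝 0) := by
    have hprod : ∀ n, πn n x / πn n (γ ℓ)
        = ∏ i ∈ Finset.range ℓ, πn n (γ i) / πn n (γ (i + 1)) := by
      intro n
      rw [← hγ0]
      exact (prod_ratio_aux (fun i => πn n (γ i)) (fun i => ne_of_gt (hπpos n (γ i))) ℓ).symm
    have hfac : ∀ i < ℓ, Tendsto (fun n => πn n (γ i) / πn n (γ (i + 1))) atTop
        (𝓝 (R0 (γ (i + 1)) (γ i) / R0 (γ i) (γ (i + 1)))) := by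
      intro i hi
      have hlimf := hγrate i hi
      have hev : ∀ᶠ n in atTop, πn n (γ i) / πn n (γ (i + 1))
          = Rn n (γ (i + 1)) (γ i) / Rn n (γ i) (γ (i + 1)):= by
        have : ∀ᶠ n in atTop, 0 < Rn n (γ i) (γ (i + 1)) :=
          (hlim (γ i) (γ (i + 1))).eventually (eventually_gt_nhds hlimf)
        filter_upwards [this] with n hn
        have hr := hrev n (γ i) (γ (i + 1))
        rw [div_eq_div_iff (ne_of_gt (hπpos n (γ (i + 1)))) (ne_of_gt hn)]
        linarith [hr]
      exact Tendsto.congr' (Filter.EventuallyEq.symm hev)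
        ((hlim (γ (i + 1)) (γ i)).div (hlim (γ i) (γ (i + 1))) (ne_of_gt hlimf))
    have hP : Tendsto (fun n => ∏ i ∈ Finset.range ℓ, πn n (γ i) / πn n (γ (i + 1)))
        atTop (𝓝 (∏ i ∈ Finset.range ℓ, R0 (γ (i + 1)) (γ i) / R0 (γ i) (γ (i + 1)))) :=
      tendsto_finset_prod _ (fun i hi => hfac i (Finset.mem_range.1 hi))
    have hzero : (∏ i ∈ Finset.range ℓ, R0 (γ (i + 1)) (γ i) / R0 (γ i) (γ (i + 1)))
        = 0 := by
      apply Finset.prod_eq_zero (Finset.mem_range.2 (Nat.sub_lt hℓ one_pos))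
      have h1 : ℓ - 1 + 1 = ℓ := Nat.succ_pred_eq_of_pos hℓ
      rw [h1]
      have hnot : γ (ℓ - 1) ∉ Vj :=
        Finset.disjoint_left.1 hΔVj (hγΔ (ℓ - 1) (Nat.sub_lt hℓ one_pos))
      rw [hclosed (γ ℓ) hγend (γ (ℓ - 1)) hnot, zero_div]
    rw [← hzero]
    exact hP.congr (fun n => (hprod n).symm)
  -- squeeze
  apply squeeze_zero (fun n => _) (fun n => _) key
  · intro n
    exact div_nonneg (le_of_lt (hπpos n x)) (Finset.sum_nonneg fun z _ => le_of_lt (hπpos n z))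
  · intro n
    apply div_le_div_of_nonneg_left (le_of_lt (hπpos n x)) (hπpos n (γ ℓ))
    exact Finset.single_le_sum (fun z _ => le_of_lt (hπpos n z)) hγend
end
end

section
/- Let X_t be a finite-state irreducible continuous-time Markov chain on V, let 𝕏_t be the Markov chain with jump rates ℝ_0(x,y) = lim_n R_n(x,y), and suppose (X^{(n)}_t, 𝕏_t) are coupled so that they jump together as much as possible. Let V_1,…,V_𝔫 be the closed irreducible classes of 𝕏_t and ω(x,y) = lim_{t→∞} Q_x[𝕏_t = y]. Then for every ε > 0 there exists T_ε < ∞ such that limsup_n |P^n_x[X_{T_ε} = y] − ω(x,y)| ≤ ε for all x, y ∈ V. Moreover ω(x,y) = 0 if y is transient for 𝕏, and ω(x,y) = a^{(0)}(x,j) π^♯_j(y) if y ∈ V_j, where a^{(0)}(x,j) is the absorption probability of 𝕏 at V_j starting from x and π^♯_j is the stationary state of 𝕏 restricted to V_j. -/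
set_option linter.unusedSectionVars false
set_option maxHeartbeats 1000000


open Finset Filter Topology

noncomputable section

/-- The generator matrix of a chain with jump rates `R` (zero diagonal convention). -/
def genMatrix {V : Type*} [Fintype V] [DecidableEq V] (R : V → V → ℝ) : Matrix V V ℝ :=
  fun x y => if x = y then -(∑ z, R x z) else R x y

/-- Transition probability `p_t(x,y) = (e^{tL})(x,y)`. -/
def transProb {V : Type*} [Fintype V] [DecidableEq V] (R : V → V → ℝ) (t : ℝ)
    (x y : V) : ℝ :=
  (NormedSpace.exp (t • genMatrix R)) x y

section aux
variable {V : Type*} [Fintype V] [DecidableEq V]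

theorem transProb_add (R : V → V → ℝ) (t s : ℝ) (x y : V) :
    transProb R (t + s) x y = ∑ z, transProb R t x z * transProb R s z y := by
  unfold transProb
  rw [add_smul, Matrix.exp_add_of_commute _ _ (((Commute.refl _).smul_left t).smul_right s),
    Matrix.mul_apply]

/-- evaluation at an entry as an `AddMonoidHom` -/
def entryHom (x y : V) : Matrix V V ℝ →+ ℝ :=
  AddMonoidHom.mk' (fun M => M x y) (fun _ _ => rfl)

theorem exp_entry_hasSum (A : Matrix V V ℝ) (x y : V) :
    HasSum (fun n : ℕ => ((n.factorial : ℝ)⁻¹ • A ^ n) x y) (NormedSpace.exp A x y) := by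
  letI : SeminormedRing (Matrix V V ℝ) := Matrix.linftyOpSemiNormedRing
  letI : NormedRing (Matrix V V ℝ) := Matrix.linftyOpNormedRing
  letI : NormedAlgebra ℝ (Matrix V V ℝ) := Matrix.linftyOpNormedAlgebra
  have h := NormedSpace.exp_series_hasSum_exp' (𝕂 := ℝ) A
  exact h.map (entryHom x y) (Continuous.matrix_elem continuous_id x y)

theorem exp_entry_nonneg (A : Matrix V V ℝ) (hA : ∀ p q, 0 ≤ A p q) (x y : V) :
    0 ≤ NormedSpace.exp A x y := by
  have hpow : ∀ n : ℕ, ∀ p q, 0 ≤ (A ^ n) p q := by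
    intro n
    induction n with
    | zero => intro p q; simp [Matrix.one_apply]; positivity
    | succ n ih =>
      intro p q
      rw [pow_succ, Matrix.mul_apply]
      exact Finset.sum_nonneg fun z _ => mul_nonneg (ih p z) (hA z q)
  have h := exp_entry_hasSum A x y
  rw [← h.tsum_eq]
  exact tsum_nonneg fun n => by
    have : ((n.factorial : ℝ)⁻¹ • A ^ n) x y = (n.factorial : ℝ)⁻¹ * (A ^ n) x y := rfl
    rw [this]; exact mul_nonneg (by positivity) (hpow n x y)

theorem transProb_nonneg (R : V → V → ℝ) (hR : ∀ p q, 0 ≤ R p q) (t : ℝ) (ht : 0 ≤ t)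
    (x y : V) : 0 ≤ transProb R t x y := by
  classical
  set c : ℝ := ∑ p, ∑ q, R p q with hc
  have hrow : ∀ p, ∑ q, R p q ≤ c := by
    intro p
    exact Finset.single_le_sum (f := fun p => ∑ q, R p q)
      (fun i _ => Finset.sum_nonneg fun q _ => hR i q) (Finset.mem_univ p)
  set M : Matrix V V ℝ := genMatrix R + c • (1 : Matrix V V ℝ) with hM
  have hsplit : t • genMatrix R = t • M + (-(t * c)) • (1 : Matrix V V ℝ) := by
    rw [hM, smul_add, add_assoc, smul_smul, ← add_smul]
    simp
  have hcomm : Commute (t • M) ((-(t * c)) • (1 : Matrix V V ℝ)) :=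
    ((Commute.one_right (t • M)).smul_right _)
  have hdiag : (-(t * c)) • (1 : Matrix V V ℝ) = Matrix.diagonal (fun _ => -(t * c)) := by
    ext p q
    by_cases h : p = q <;> simp [Matrix.one_apply, Matrix.diagonal, h]
  have hexp : NormedSpace.exp (t • genMatrix R)
      = NormedSpace.exp (t • M) * Matrix.diagonal (fun _ => Real.exp (-(t * c))) := by
    rw [hsplit, Matrix.exp_add_of_commute _ _ hcomm, hdiag, Matrix.exp_diagonal]
    congr 1
    rw [Pi.exp_def]
    ext i
    rw [Real.exp_eq_exp_ℝ]
  have hMnn : ∀ p q, 0 ≤ (t • M) p q := by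
    intro p q
    have : (t • M) p q = t * (genMatrix R p q + c * (if p = q then 1 else 0)) := by
      simp [hM, Matrix.one_apply, Matrix.add_apply]
    rw [this]
    apply mul_nonneg ht
    by_cases h : p = q
    · simp [genMatrix, h]
      linarith [hrow q]
    · simp [genMatrix, h, hR p q]
  have := exp_entry_nonneg (t • M) hMnn x y
  unfold transProb
  rw [hexp, Matrix.mul_diagonal]
  positivity

theorem transProb_zero (R : V → V → ℝ) (z y : V) :
    transProb R 0 z y = if z = y then 1 else 0 := by
  unfold transProb
  rw [zero_smul, NormedSpace.exp_zero]
  exact Matrix.one_apply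

theorem tendsto_slope_transProb (R : V → V → ℝ) (z y : V) :
    Tendsto (fun s : ℝ => s⁻¹ * (transProb R s z y - transProb R 0 z y)) (𝓝[≠] (0:ℝ))
      (𝓝 (genMatrix R z y)) := by
  letI : SeminormedRing (Matrix V V ℝ) := Matrix.linftyOpSemiNormedRing
  letI : NormedRing (Matrix V V ℝ) := Matrix.linftyOpNormedRing
  letI : NormedAlgebra ℝ (Matrix V V ℝ) := Matrix.linftyOpNormedAlgebra
  have H : HasDerivAt (fun u : ℝ => NormedSpace.exp (u • genMatrix R))
      (NormedSpace.exp ((0:ℝ) • genMatrix R) * genMatrix R) 0 :=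
    hasDerivAt_exp_smul_const (genMatrix R) (0:ℝ)
  have h2 := hasDerivAt_iff_tendsto_slope.mp H
  have hcont : Continuous fun M : Matrix V V ℝ => M z y :=
    Continuous.matrix_elem continuous_id z y
  have h3 := (hcont.tendsto _).comp h2
  have hval : (NormedSpace.exp ((0:ℝ) • genMatrix R) * genMatrix R) z y
      = genMatrix R z y := by
    rw [zero_smul, NormedSpace.exp_zero, one_mul]
  have heq : ((fun M : Matrix V V ℝ => M z y) ∘
      slope (fun u : ℝ => NormedSpace.exp (u • genMatrix R)) 0)
      = fun s : ℝ => s⁻¹ * (transProb R s z y - transProb R 0 z y) := by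
    funext s
    simp only [Function.comp, slope, vsub_eq_sub, sub_zero, Matrix.smul_apply,
      Matrix.sub_apply, smul_eq_mul]
    rfl
  rw [heq, hval] at h3
  exact h3

theorem omega_stationary (R : V → V → ℝ) (hdiag : ∀ p, R p p = 0) (ω : V → V → ℝ)
    (hω : ∀ x y, Tendsto (fun t : ℝ => transProb R t x y) atTop (𝓝 (ω x y))) (x y : V) :
    ∑ w, ω x w * R w y = ω x y * ∑ z, R y z := by
  have hsemi : ∀ s : ℝ, ω x y = ∑ z, ω x z * transProb R s z y := by
    intro s
    have h1 : Tendsto (fun t : ℝ => transProb R (t + s) x y) atTop (𝓝 (ω x y)) :=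
      (hω x y).comp (tendsto_atTop_add_const_right atTop s tendsto_id)
    have h2 : Tendsto (fun t : ℝ => ∑ z, transProb R t x z * transProb R s z y) atTop
        (𝓝 (∑ z, ω x z * transProb R s z y)) :=
      tendsto_finset_sum _ fun z _ => (hω x z).mul_const _
    have h3 : (fun t : ℝ => transProb R (t + s) x y)
        = fun t => ∑ z, transProb R t x z * transProb R s z y :=
      funext fun t => transProb_add R t s x y
    exact tendsto_nhds_unique (h3 ▸ h1) h2
  have key : ∑ z, ω x z * genMatrix R z y = 0 := by
    have hconst : Tendsto (fun s : ℝ =>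
        ∑ z, ω x z * (s⁻¹ * (transProb R s z y - transProb R 0 z y))) (𝓝[≠] (0:ℝ))
        (𝓝 (∑ z, ω x z * genMatrix R z y)) :=
      tendsto_finset_sum _ fun z _ => (tendsto_slope_transProb R z y).const_mul _
    have hzero : ∀ s : ℝ,
        ∑ z, ω x z * (s⁻¹ * (transProb R s z y - transProb R 0 z y)) = 0 := by
      intro s
      have e0 : ∑ z, ω x z * transProb R 0 z y = ω x y := by
        simp only [transProb_zero, mul_ite, mul_one, mul_zero]
        simp
      have es : ∑ z, ω x z * transProb R s z y = ω x y := (hsemi s).symm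
      have expand : ∑ z, ω x z * (s⁻¹ * (transProb R s z y - transProb R 0 z y))
          = s⁻¹ * ((∑ z, ω x z * transProb R s z y)
            - ∑ z, ω x z * transProb R 0 z y) := by
        rw [← Finset.sum_sub_distrib, Finset.mul_sum]
        congr 1; funext z; ring
      rw [expand, es, e0, sub_self, mul_zero]
    have := tendsto_congr' (f₁ := fun s : ℝ =>
        ∑ z, ω x z * (s⁻¹ * (transProb R s z y - transProb R 0 z y)))
        (f₂ := fun _ : ℝ => (0:ℝ)) (Eventually.of_forall hzero) |>.mp hconst
    exact (tendsto_nhds_unique this tendsto_const_nhds).symm ▸ rfl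
  -- expand genMatrix
  have split1 := Finset.add_sum_erase Finset.univ
    (fun z => ω x z * genMatrix R z y) (Finset.mem_univ y)
  have split2 := Finset.add_sum_erase Finset.univ
    (fun z => ω x z * R z y) (Finset.mem_univ y)
  have e1 : ∀ z ∈ Finset.univ.erase y, ω x z * genMatrix R z y = ω x z * R z y := by
    intro z hz
    have : z ≠ y := (Finset.mem_erase.mp hz).1
    simp [genMatrix, this]
  rw [Finset.sum_congr rfl e1] at split1
  have gy : genMatrix R y y = -(∑ w, R y w) := by simp [genMatrix]
  rw [← split1] at key
  simp only [hdiag, mul_zero, zero_add] at split2 key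
  rw [gy, mul_neg] at key
  rw [← split2]
  linarith [key]

theorem tendsto_transProb_entry (Rn : ℕ → V → V → ℝ) (R0 : V → V → ℝ)
    (hlim : ∀ x y, Tendsto (fun n => Rn n x y) atTop (𝓝 (R0 x y))) (T : ℝ) (x y : V) :
    Tendsto (fun n => transProb (Rn n) T x y) atTop (𝓝 (transProb R0 T x y)) := by
  letI : SeminormedRing (Matrix V V ℝ) := Matrix.linftyOpSemiNormedRing
  letI : NormedRing (Matrix V V ℝ) := Matrix.linftyOpNormedRing
  letI : NormedAlgebra ℝ (Matrix V V ℝ) := Matrix.linftyOpNormedAlgebra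
  have hmat : Tendsto (fun n => genMatrix (Rn n)) atTop (𝓝 (genMatrix R0)) := by
    have : ∀ p q, Tendsto (fun n => genMatrix (Rn n) p q) atTop (𝓝 (genMatrix R0 p q)) := by
      intro p q
      by_cases h : p = q
      · simp only [genMatrix, if_pos h]
        exact (tendsto_finset_sum _ fun z _ => hlim p z).neg
      · simp only [genMatrix, if_neg h]
        exact hlim p q
    exact tendsto_pi_nhds.mpr fun p => tendsto_pi_nhds.mpr fun q => this p q
  have hsmul : Tendsto (fun n => T • genMatrix (Rn n)) atTop (𝓝 (T • genMatrix R0)) :=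
    hmat.const_smul T
  let +nondep : NormedAlgebra ℚ (Matrix V V ℝ) := .restrictScalars ℚ ℝ (Matrix V V ℝ)
  have hexp := (NormedSpace.exp_continuous (𝔸 := Matrix V V ℝ)).tendsto
    (T • genMatrix R0) |>.comp hsmul
  have hentry : Continuous fun M : Matrix V V ℝ => M x y :=
    Continuous.matrix_elem continuous_id x y
  exact (hentry.tendsto _).comp hexp

section stat
variable (R : V → V → ℝ) (μ : V → ℝ)

/-- support of a nonneg stationary measure is closed -/
theorem supp_closed (hR : ∀ p q, 0 ≤ R p q) (hμ : ∀ p, 0 ≤ μ p)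
    (hstat : ∀ y, ∑ x, μ x * R x y = μ y * ∑ z, R y z)
    {w w' : V} (hw : 0 < μ w) (hww' : 0 < R w w') : 0 < μ w' := by
  have h := hstat w'
  have hge : μ w * R w w' ≤ ∑ x, μ x * R x w' :=
    Finset.single_le_sum (fun i _ => mul_nonneg (hμ i) (hR i w')) (Finset.mem_univ w)
  have hpos : 0 < μ w' * ∑ z, R w' z := lt_of_lt_of_le (mul_pos hw hww') (h ▸ hge)
  by_contra hc
  push_neg at hc
  have : μ w' = 0 := le_antisymm hc (hμ w')
  rw [this, zero_mul] at hpos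
  exact lt_irrefl 0 hpos

theorem mu_transient_zero (hR : ∀ p q, 0 ≤ R p q) (hμ : ∀ p, 0 ≤ μ p)
    (hstat : ∀ y, ∑ x, μ x * R x y = μ y * ∑ z, R y z)
    {y z : V} (hyz : Relation.ReflTransGen (fun u v => 0 < R u v) y z)
    (hzy : ¬ Relation.ReflTransGen (fun u v => 0 < R u v) z y) : μ y = 0 := by
  classical
  by_contra hne
  have hy : 0 < μ y := lt_of_le_of_ne (hμ y) (Ne.symm hne)
  set r : V → V → Prop := fun u v => 0 < R u v with hr
  set C : Finset V := Finset.univ.filter (fun w => Relation.ReflTransGen r w y) with hC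
  -- no rate into C from outside C
  have hin : ∀ x, x ∉ C → ∀ w' ∈ C, R x w' = 0 := by
    intro x hx w' hw'
    by_contra hpos
    have hpos' : 0 < R x w' := lt_of_le_of_ne (hR x w') (Ne.symm hpos)
    have hw'y : Relation.ReflTransGen r w' y := (Finset.mem_filter.mp hw').2
    exact hx (Finset.mem_filter.mpr ⟨Finset.mem_univ _, Relation.ReflTransGen.head hpos' hw'y⟩)
  -- summed stationarity over C
  have hsum : ∑ w' ∈ C, ∑ x, μ x * R x w' = ∑ w' ∈ C, μ w' * ∑ z, R w' z :=
    Finset.sum_congr rfl fun w' _ => hstat w'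
  have hLHS : ∀ w' ∈ C, ∑ x, μ x * R x w' = ∑ x ∈ C, μ x * R x w' := by
    intro w' hw'
    rw [← Finset.sum_filter_add_sum_filter_not Finset.univ
      (fun w => Relation.ReflTransGen r w y) (fun x => μ x * R x w')]
    have : ∑ x ∈ Finset.univ.filter (fun w => ¬ Relation.ReflTransGen r w y),
        μ x * R x w' = 0 := by
      apply Finset.sum_eq_zero
      intro x hx
      have hxC : x ∉ C := by
        simp only [hC, Finset.mem_filter] at hx ⊢
        tauto
      rw [hin x hxC w' hw', mul_zero]
    rw [this, add_zero]
  have hRHS : ∀ w' ∈ C, μ w' * ∑ z, R w' z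
      = μ w' * ∑ z ∈ C, R w' z + μ w' * ∑ z ∈ Finset.univ.filter
        (fun w => ¬ Relation.ReflTransGen r w y), R w' z := by
    intro w' _
    rw [← mul_add, Finset.sum_filter_add_sum_filter_not]
  have hswap : ∑ w' ∈ C, ∑ x ∈ C, μ x * R x w' = ∑ x ∈ C, μ x * ∑ w' ∈ C, R x w' := by
    rw [Finset.sum_comm]
    exact Finset.sum_congr rfl fun x _ => (Finset.mul_sum _ _ _).symm
  have hflux : ∑ w' ∈ C, μ w' * ∑ z ∈ Finset.univ.filter
      (fun w => ¬ Relation.ReflTransGen r w y), R w' z = 0 := by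
    have e1 : ∑ w' ∈ C, ∑ x ∈ C, μ x * R x w'
        = ∑ w' ∈ C, (μ w' * ∑ z ∈ C, R w' z + μ w' * ∑ z ∈ Finset.univ.filter
          (fun w => ¬ Relation.ReflTransGen r w y), R w' z) := by
      rw [← Finset.sum_congr rfl hLHS, hsum]
      exact Finset.sum_congr rfl hRHS
    rw [Finset.sum_add_distrib, hswap] at e1
    have : ∑ x ∈ C, μ x * ∑ w' ∈ C, R x w' = ∑ w' ∈ C, μ w' * ∑ z ∈ C, R w' z := rfl
    linarith [e1]
  -- each flux term vanishes
  have hterm : ∀ u ∈ C, 0 < μ u → ∀ v, v ∉ C → R u v = 0 := by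
    intro u hu hμu v hv
    have hall := (Finset.sum_eq_zero_iff_of_nonneg (fun w' _ =>
      mul_nonneg (hμ w') (Finset.sum_nonneg fun z _ => hR w' z))).mp hflux u hu
    have hsum0 : ∑ z ∈ Finset.univ.filter
        (fun w => ¬ Relation.ReflTransGen r w y), R u z = 0 := by
      rcases mul_eq_zero.mp hall with h | h
      · exact absurd h (ne_of_gt hμu)
      · exact h
    have hvmem : v ∈ Finset.univ.filter (fun w => ¬ Relation.ReflTransGen r w y) := by
      simp only [hC, Finset.mem_filter, Finset.mem_univ, true_and] at hv ⊢
      exact hv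
    exact (Finset.sum_eq_zero_iff_of_nonneg (fun z _ => hR u z)).mp hsum0 v hvmem
  -- propagate along the path from y to z
  have hprop : ∀ w, Relation.ReflTransGen r y w → w ∈ C ∧ 0 < μ w := by
    intro w hw
    induction hw with
    | refl => exact ⟨Finset.mem_filter.mpr ⟨Finset.mem_univ _, Relation.ReflTransGen.refl⟩, hy⟩
    | tail hbc hcd ih =>
      rename_i b c
      obtain ⟨hbC, hbpos⟩ := ih
      constructor
      · by_contra hcC
        exact absurd (hterm b hbC hbpos c hcC) (ne_of_gt hcd)
      · exact supp_closed R μ hR hμ hstat hbpos hcd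
  obtain ⟨hzC, _⟩ := hprop z hyz
  exact hzy (Finset.mem_filter.mp hzC).2

end stat

section class_
variable (W : Finset V) (R : V → V → ℝ)

theorem restricted_pos (hR : ∀ p q, 0 ≤ R p q) (π : V → ℝ) (hπnn : ∀ p, 0 ≤ π p)
    (hstat : ∀ v ∈ W, ∑ x ∈ W, π x * R x v = π v * ∑ z ∈ W, R v z)
    (hirr : ∀ a ∈ W, ∀ b ∈ W,
      Relation.ReflTransGen (fun u v => u ∈ W ∧ v ∈ W ∧ 0 < R u v) a b)
    (hπ1 : ∑ x ∈ W, π x = 1) : ∀ v ∈ W, 0 < π v := by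
  have hW : ∃ w1 ∈ W, 0 < π w1 := by
    by_contra h
    push_neg at h
    have h0 : ∑ x ∈ W, π x = 0 :=
      Finset.sum_eq_zero fun x hx => le_antisymm (h x hx) (hπnn x)
    rw [hπ1] at h0; norm_num at h0
  obtain ⟨w1, hw1W, hw1⟩ := hW
  have step : ∀ u v : V, (u ∈ W ∧ v ∈ W ∧ 0 < R u v) → 0 < π u → 0 < π v := by
    rintro u v ⟨huW, hvW, huv⟩ hu
    have h := hstat v hvW
    have hge : π u * R u v ≤ ∑ x ∈ W, π x * R x v :=
      Finset.single_le_sum (fun i _ => mul_nonneg (hπnn i) (hR i v)) huW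
    have hpos : 0 < π v * ∑ z ∈ W, R v z := lt_of_lt_of_le (mul_pos hu huv) (h ▸ hge)
    by_contra hc
    push_neg at hc
    rw [le_antisymm hc (hπnn v), zero_mul] at hpos
    exact lt_irrefl 0 hpos
  intro v hvW
  have aux : ∀ w, Relation.ReflTransGen (fun u v => u ∈ W ∧ v ∈ W ∧ 0 < R u v) w1 w
      → 0 < π w := by
    intro w hw
    induction hw with
    | refl => exact hw1
    | tail _ hbc ih => exact step _ _ hbc ih
  exact aux v (hirr w1 hw1W v hvW)

theorem restricted_unique (hR : ∀ p q, 0 ≤ R p q) (π μ : V → ℝ)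
    (hπnn : ∀ p, 0 ≤ π p) (hμnn : ∀ p, 0 ≤ μ p)
    (hstatπ : ∀ v ∈ W, ∑ x ∈ W, π x * R x v = π v * ∑ z ∈ W, R v z)
    (hstatμ : ∀ v ∈ W, ∑ x ∈ W, μ x * R x v = μ v * ∑ z ∈ W, R v z)
    (hirr : ∀ a ∈ W, ∀ b ∈ W,
      Relation.ReflTransGen (fun u v => u ∈ W ∧ v ∈ W ∧ 0 < R u v) a b)
    (hπ1 : ∑ x ∈ W, π x = 1) (hWne : W.Nonempty) :
    ∀ v ∈ W, μ v = (∑ w ∈ W, μ w) * π v := by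
  have hπpos := restricted_pos W R hR π hπnn hstatπ hirr hπ1
  obtain ⟨w0, hw0W, hmin⟩ := W.exists_min_image (fun w => μ w / π w) hWne
  set c : ℝ := μ w0 / π w0 with hc
  set ν : V → ℝ := fun w => μ w - c * π w with hν
  have hνnn : ∀ w ∈ W, 0 ≤ ν w := by
    intro w hw
    have := hmin w hw
    have hπw := hπpos w hw
    have : c * π w ≤ μ w := (le_div_iff₀ hπw).mp this
    simp only [hν]; linarith
  have hνw0 : ν w0 = 0 := by
    simp only [hν, hc]
    rw [div_mul_cancel₀ _ (ne_of_gt (hπpos w0 hw0W))]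
    ring
  have hstatν : ∀ v ∈ W, ∑ x ∈ W, ν x * R x v = ν v * ∑ z ∈ W, R v z := by
    intro v hv
    simp only [hν, sub_mul]
    rw [Finset.sum_sub_distrib]
    have : ∑ x ∈ W, c * π x * R x v = c * ∑ x ∈ W, π x * R x v := by
      rw [Finset.mul_sum]; congr 1; funext x; ring
    rw [this, hstatπ v hv, hstatμ v hv]
    ring
  have stepback : ∀ v ∈ W, ν v = 0 → ∀ u ∈ W, 0 < R u v → ν u = 0 := by
    intro v hv hνv u hu huv
    have h := hstatν v hv
    rw [hνv, zero_mul] at h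
    have := (Finset.sum_eq_zero_iff_of_nonneg (fun x hx =>
      mul_nonneg (hνnn x hx) (hR x v))).mp h u hu
    rcases mul_eq_zero.mp this with h' | h'
    · exact h'
    · exact absurd h' (ne_of_gt huv)
  have aux : ∀ u w : V, Relation.ReflTransGen (fun a b => a ∈ W ∧ b ∈ W ∧ 0 < R a b) u w
      → ν w = 0 → ν u = 0 := by
    intro u w h
    induction h with
    | refl => exact id
    | tail _ hbc ih =>
      intro hw
      obtain ⟨hbW, hcW, hbc'⟩ := hbc
      exact ih (stepback _ hcW hw _ hbW hbc')
  have hν0 : ∀ v ∈ W, ν v = 0 := fun v hv => aux v w0 (hirr v hv w0 hw0W) hνw0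
  have hμeq : ∀ v ∈ W, μ v = c * π v := by
    intro v hv
    have := hν0 v hv
    simp only [hν] at this
    linarith
  have hsum : ∑ w ∈ W, μ w = c := by
    rw [Finset.sum_congr rfl hμeq, ← Finset.mul_sum, hπ1, mul_one]
  intro v hv
  rw [hsum, hμeq v hv]

end class_

end aux

/-- chains `X^{(n)}` with rates `Rn → R0`; `𝕏` the limiting chain with
closed irreducible classes `Vc j` and stationary states `πs j`;
`ω(x,y) = lim_{t→∞} Q_x[𝕏_t = y]` and `a⁰(x,j)` the absorption probabilities.  Then for
every `ε > 0` there is `T_ε` with `limsup_n |P^n_x[X_{T_ε} = y] − ω(x,y)| ≤ ε` for all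
`x, y`; moreover `ω(x,y) = 0` for `y` transient and `ω(x,y) = a⁰(x,j) πs_j(y)` for
`y ∈ Vc j`. -/
theorem stmt11 {V : Type*} [Fintype V] [DecidableEq V] {J : Type*} [Fintype J]
    (Rn : ℕ → V → V → ℝ) (R0 : V → V → ℝ)
    (hRnn : ∀ n x y, 0 ≤ Rn n x y) (hRdiag : ∀ n x, Rn n x x = 0)
    (hirr : ∀ n, Irred (Rn n))
    (hlim : ∀ x y, Tendsto (fun n => Rn n x y) atTop (𝓝 (R0 x y)))
    (Vc : J → Finset V) (hVcne : ∀ j, (Vc j).Nonempty)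
    (hVcdisj : ∀ j k, j ≠ k → Disjoint (Vc j) (Vc k))
    (hclosed : ∀ j, ∀ a ∈ Vc j, ∀ b, b ∉ Vc j → R0 a b = 0)
    (hclassirr : ∀ j, ∀ a ∈ Vc j, ∀ b ∈ Vc j,
      Relation.ReflTransGen (fun u v => u ∈ Vc j ∧ v ∈ Vc j ∧ 0 < R0 u v) a b)
    -- every recurrent state of the limiting chain belongs to one of the classes:
    (hrecur : ∀ y : V,
      (∀ z, Relation.ReflTransGen (fun u v => 0 < R0 u v) y z →
        Relation.ReflTransGen (fun u v => 0 < R0 u v) z y) → ∃ j, y ∈ Vc j)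
    -- `πs j` is the stationary state of `𝕏` restricted to `Vc j`:
    (πs : J → V → ℝ)
    (hπs0 : ∀ j x, x ∉ Vc j → πs j x = 0) (hπsnn : ∀ j x, 0 ≤ πs j x)
    (hπs1 : ∀ j, ∑ x ∈ Vc j, πs j x = 1)
    (hπsstat : ∀ j, ∀ y ∈ Vc j,
      ∑ x ∈ Vc j, πs j x * R0 x y = πs j y * ∑ z ∈ Vc j, R0 y z)
    -- `ω(x,y) = lim_{t→∞} Q_x[𝕏_t = y]`:
    (ω : V → V → ℝ)
    (hω : ∀ x y, Tendsto (fun t : ℝ => transProb R0 t x y) atTop (𝓝 (ω x y)))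
    -- `a⁰(x,j) = lim_{t→∞} Q_x[𝕏_t ∈ Vc j]`:
    (a : V → J → ℝ)
    (ha : ∀ x j, Tendsto (fun t : ℝ => ∑ y ∈ Vc j, transProb R0 t x y)
      atTop (𝓝 (a x j))) :
    (∀ ε : ℝ, 0 < ε → ∃ T : ℝ, 0 < T ∧ ∀ x y : V,
      Filter.limsup (fun n => |transProb (Rn n) T x y - ω x y|) atTop ≤ ε) ∧
    (∀ x y : V, (∃ z, Relation.ReflTransGen (fun u v => 0 < R0 u v) y z ∧
      ¬ Relation.ReflTransGen (fun u v => 0 < R0 u v) z y) → ω x y = 0) ∧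
    (∀ j, ∀ y ∈ Vc j, ∀ x, ω x y = a x j * πs j y) := by
  classical
  -- basic facts about the limiting rates
  have hR0nn : ∀ p q, 0 ≤ R0 p q := fun p q =>
    ge_of_tendsto' (hlim p q) (fun n => hRnn n p q) |>.trans_eq rfl
  have hR0diag : ∀ p, R0 p p = 0 := fun p =>
    tendsto_nhds_unique (hlim p p)
      ((tendsto_congr fun n => hRdiag n p).mpr tendsto_const_nhds)
  -- nonnegativity of ω
  have hωnn : ∀ x y, 0 ≤ ω x y := by
    intro x y
    refine ge_of_tendsto (hω x y) ?_
    filter_upwards [eventually_ge_atTop (0:ℝ)] with t ht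
    exact transProb_nonneg R0 hR0nn t ht x y
  -- stationarity of the rows of ω
  have hstatω : ∀ x y, ∑ w, ω x w * R0 w y = ω x y * ∑ z, R0 y z :=
    fun x y => omega_stationary R0 hR0diag ω hω x y
  have part2 : ∀ x y : V, (∃ z, Relation.ReflTransGen (fun u v => 0 < R0 u v) y z ∧
      ¬ Relation.ReflTransGen (fun u v => 0 < R0 u v) z y) → ω x y = 0 := by
    rintro x y ⟨z, hyz, hzy⟩
    exact mu_transient_zero R0 (ω x) hR0nn (hωnn x) (hstatω x) hyz hzy
  have part3 : ∀ j, ∀ y ∈ Vc j, ∀ x, ω x y = a x j * πs j y := by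
    intro j y hy x
    have haj : a x j = ∑ w ∈ Vc j, ω x w :=
      tendsto_nhds_unique (ha x j) (tendsto_finset_sum _ fun w _ => hω x w)
    -- restricted stationarity of the row of ω on the class Vc j
    have hstatres : ∀ v ∈ Vc j,
        ∑ p ∈ Vc j, ω x p * R0 p v = ω x v * ∑ z ∈ Vc j, R0 v z := by
      intro v hv
      have hfull := hstatω x v
      have hz : ∑ z, R0 v z = ∑ z ∈ Vc j, R0 v z := by
        symm
        apply Finset.sum_subset (Finset.subset_univ _)
        intro z _ hzne
        exact hclosed j v hv z hzne
      have hw : ∑ p, ω x p * R0 p v = ∑ p ∈ Vc j, ω x p * R0 p v := by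
        symm
        apply Finset.sum_subset (Finset.subset_univ _)
        intro p _ hpne
        by_cases hμp : ω x p = 0
        · rw [hμp, zero_mul]
        · have hrec : ∀ z, Relation.ReflTransGen (fun u v => 0 < R0 u v) p z →
              Relation.ReflTransGen (fun u v => 0 < R0 u v) z p := by
            intro z hpz
            by_contra hzp
            exact hμp (part2 x p ⟨z, hpz, hzp⟩)
          obtain ⟨k, hpk⟩ := hrecur p hrec
          have hkj : k ≠ j := fun h => hpne (h ▸ hpk)
          have hR0pv : R0 p v = 0 := by
            apply hclosed k p hpk v
            intro hvk
            exact (Finset.disjoint_left.mp (hVcdisj k j hkj) hvk) hv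
          rw [hR0pv, mul_zero]
      rw [← hw, ← hz]
      exact hfull
    have huniq := restricted_unique (Vc j) R0 hR0nn (πs j) (ω x)
      (hπsnn j) (fun p => hωnn x p) (hπsstat j) hstatres (hclassirr j)
      (hπs1 j) (hVcne j)
    rw [haj]
    exact huniq y hy
  refine ⟨?_, part2, part3⟩
  intro ε hε
  have hev : ∀ᶠ t : ℝ in atTop, ∀ p : V × V,
      |transProb R0 t p.1 p.2 - ω p.1 p.2| < ε := by
    rw [Filter.eventually_all]
    intro p
    have := Metric.tendsto_nhds.mp (hω p.1 p.2)  ε hε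
    simpa [Real.dist_eq] using this
  obtain ⟨T, hT1, hTest⟩ := ((eventually_ge_atTop (1:ℝ)).and hev).exists
  refine ⟨T, lt_of_lt_of_le one_pos hT1, ?_⟩
  intro x y
  have hconv : Tendsto (fun n => |transProb (Rn n) T x y - ω x y|) atTop
      (𝓝 (|transProb R0 T x y - ω x y|)) :=
    ((tendsto_transProb_entry Rn R0 hlim T x y).sub tendsto_const_nhds).abs
  rw [hconv.limsup_eq]
  exact le_of_lt (hTest (x, y))
end
end

section
/- Let X_t be a reversible irreducible continuous-time Markov chain on a finite set V with generator L and stationary measure π with π(x) > 0 for all x. Define the level-two large deviations rate function I(μ) = −inf_{u>0} Σ_{x∈V} μ(x) (Lu)(x)/u(x), the infimum over positive functions u : V → (0,∞). Then for every probability measure μ on V, I(μ) = ⟨√f, (−L)√f⟩_π where f(x) = μ(x)/π(x); equivalently I(μ) = (1/2) Σ_{(x,y)} π(x) R(x,y) (√(μ(y)/π(y)) − √(μ(x)/π(x)))². -/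
open Finset Filter Topology

noncomputable section

/-- Donsker–Varadhan identity: for a reversible irreducible chain,
`I(μ) = −inf_{u>0} ∑_x μ(x)(Lu)(x)/u(x) = ⟨√f, (−L)√f⟩_π` with `f = μ/π`. -/
theorem stmt13 {V : Type*} [Fintype V] [Nonempty V]
    (R : V → V → ℝ) (π : V → ℝ)
    (hR : ∀ x y, 0 ≤ R x y)
    (hπ : ∀ x, 0 < π x) (hπ1 : ∑ x, π x = 1)
    (hirr : Irred R) (hstat : Stationary R π) (hrev : Reversible R π)
    (μ : V → ℝ) (hμ : ∀ x, 0 ≤ μ x) (hμ1 : ∑ x, μ x = 1) :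
    -(⨅ u : {u : V → ℝ // ∀ x, 0 < u x}, ∑ x, μ x * (gen R (↑u) x / (↑u : V → ℝ) x))
      = ∑ x, π x * (Real.sqrt (μ x / π x) *
          (-(gen R (fun y => Real.sqrt (μ y / π y)) x))) := by
  classical
  have : Nonempty {u : V → ℝ // ∀ x, 0 < u x} := ⟨⟨fun _ => 1, fun _ => one_pos⟩⟩
  set g : V → ℝ := fun x => Real.sqrt (μ x / π x) with hg
  have hg0 : ∀ x, 0 ≤ g x := fun x => Real.sqrt_nonneg _
  have hμeq : ∀ x, μ x = π x * g x ^ 2 := by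
    intro x
    have : g x ^ 2 = μ x / π x := Real.sq_sqrt (div_nonneg (hμ x) (hπ x).le)
    rw [this, mul_comm, div_mul_cancel₀ _ (hπ x).ne']
  set E : ℝ := ∑ x, π x * (g x * (-(gen R g x))) with hE
  -- lower bound
  have lower : ∀ u : V → ℝ, (∀ x, 0 < u x) →
      -E ≤ ∑ x, μ x * (gen R u x / u x) := by
    intro u hu
    have key : (∑ x, μ x * (gen R u x / u x)) + E
        = ∑ x, ∑ y, π x * R x y * (g x ^ 2 * (u y / u x) - g x * g y) := by
      have h1 : ∀ x, μ x * (gen R u x / u x)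
          = ∑ y, π x * R x y * (g x ^ 2 * (u y / u x) - g x ^ 2) := by
        intro x
        rw [hμeq x, gen, Finset.sum_div, Finset.mul_sum]
        refine Finset.sum_congr rfl fun y _ => ?_
        have hx := (hu x).ne'
        field_simp
      have h2 : ∀ x, π x * (g x * (-(gen R g x)))
          = ∑ y, π x * R x y * (g x ^ 2 - g x * g y) := by
        intro x
        rw [gen, ← Finset.sum_neg_distrib, Finset.mul_sum, Finset.mul_sum]
        refine Finset.sum_congr rfl fun y _ => ?_
        ring
      rw [hE]
      rw [← Finset.sum_add_distrib]
      refine Finset.sum_congr rfl fun x _ => ?_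
      rw [h1 x, h2 x, ← Finset.sum_add_distrib]
      refine Finset.sum_congr rfl fun y _ => ?_
      ring
    have hswap : (∑ x, ∑ y, π x * R x y * (g x ^ 2 * (u y / u x) - g x * g y))
        = ∑ x, ∑ y, π x * R x y * (g y ^ 2 * (u x / u y) - g x * g y) := by
      rw [Finset.sum_comm]
      refine Finset.sum_congr rfl fun x _ => Finset.sum_congr rfl fun y _ => ?_
      rw [← hrev x y]
      ring
    have hpos : 0 ≤ (∑ x, ∑ y, π x * R x y * (g x ^ 2 * (u y / u x) - g x * g y))
        + ∑ x, ∑ y, π x * R x y * (g y ^ 2 * (u x / u y) - g x * g y) := by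
      rw [← Finset.sum_add_distrib]
      refine Finset.sum_nonneg fun x _ => ?_
      rw [← Finset.sum_add_distrib]
      refine Finset.sum_nonneg fun y _ => ?_
      have hux := hu x
      have huy := hu y
      have ha : 0 < u y / u x := div_pos huy hux
      have hb : 0 < u x / u y := div_pos hux huy
      have hab : (u y / u x) * (u x / u y) = 1 := by field_simp
      have hsab : Real.sqrt (u y / u x) * Real.sqrt (u x / u y) = 1 := by
        rw [← Real.sqrt_mul ha.le, hab, Real.sqrt_one]
      have hkey : 0 ≤ g x ^ 2 * (u y / u x) + g y ^ 2 * (u x / u y) - 2 * (g x * g y) := by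
        have h1 : Real.sqrt (u y / u x) ^ 2 = u y / u x := Real.sq_sqrt ha.le
        have h2 : Real.sqrt (u x / u y) ^ 2 = u x / u y := Real.sq_sqrt hb.le
        have expand : g x ^ 2 * (u y / u x) + g y ^ 2 * (u x / u y) - 2 * (g x * g y)
            = (g x * Real.sqrt (u y / u x) - g y * Real.sqrt (u x / u y)) ^ 2 := by
          linear_combination (-(g x ^ 2)) * h1 + (-(g y ^ 2)) * h2
            + (2 * (g x * g y)) * hsab
        rw [expand]
        exact sq_nonneg _
      have hπR : 0 ≤ π x * R x y := mul_nonneg (hπ x).le (hR x y)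
      nlinarith [mul_nonneg hπR hkey]
    have : 0 ≤ (∑ x, μ x * (gen R u x / u x)) + E := by
      rw [key]
      nlinarith [hpos, hswap]
    linarith
  have hbdd : BddBelow (Set.range fun u : {u : V → ℝ // ∀ x, 0 < u x} =>
      ∑ x, μ x * (gen R (↑u) x / (↑u : V → ℝ) x)) := by
    refine ⟨-E, ?_⟩
    rintro _ ⟨u, rfl⟩
    exact lower u u.2
  have hgeninv : ∀ (ε : ℝ) (x : V), gen R (fun y => g y + ε) x = gen R g x := by
    intro ε x
    refine Finset.sum_congr rfl fun y _ => ?_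
    ring
  -- the limit
  have hlim : Filter.Tendsto (fun ε : ℝ => ∑ x, μ x * (gen R g x / (g x + ε)))
      (𝓝[>] 0) (𝓝 (∑ x, π x * g x * gen R g x)) := by
    refine tendsto_finset_sum _ fun x _ => ?_
    by_cases hx : g x = 0
    · have hμx : μ x = 0 := by rw [hμeq x, hx]; ring
      simp only [hμx, zero_mul, hx, mul_zero, zero_mul]
      exact tendsto_const_nhds
    · have hgx : 0 < g x := lt_of_le_of_ne (hg0 x) (Ne.symm hx)
      have h1 : Filter.Tendsto (fun ε : ℝ => g x + ε) (𝓝[>] 0) (𝓝 (g x)) := by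
        have : Filter.Tendsto (fun ε : ℝ => g x + ε) (𝓝 0) (𝓝 (g x + 0)) :=
          tendsto_const_nhds.add tendsto_id
        rw [add_zero] at this
        exact this.mono_left nhdsWithin_le_nhds
      have h2 : Filter.Tendsto (fun ε : ℝ => μ x * (gen R g x / (g x + ε)))
          (𝓝[>] 0) (𝓝 (μ x * (gen R g x / g x))) :=
        (tendsto_const_nhds.div h1 hx).const_mul _
      have heq : μ x * (gen R g x / g x) = π x * g x * gen R g x := by
        rw [hμeq x]
        field_simp
      rwa [heq] at h2
  have hsum_neg : (∑ x, π x * g x * gen R g x) = -E := by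
    rw [hE, ← Finset.sum_neg_distrib]
    refine Finset.sum_congr rfl fun x _ => ?_
    ring
  have hle : (⨅ u : {u : V → ℝ // ∀ x, 0 < u x},
      ∑ x, μ x * (gen R (↑u) x / (↑u : V → ℝ) x)) ≤ -E := by
    rw [← hsum_neg]
    refine ge_of_tendsto hlim ?_
    filter_upwards [self_mem_nhdsWithin] with ε (hε : ε ∈ Set.Ioi (0:ℝ))
    have hupos : ∀ x, 0 < g x + ε := fun x => add_pos_of_nonneg_of_pos (hg0 x) hε
    have := ciInf_le hbdd ⟨fun y => g y + ε, hupos⟩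
    refine le_trans this (le_of_eq ?_)
    refine Finset.sum_congr rfl fun x _ => ?_
    simp only [hgeninv ε x]
  have hge : -E ≤ ⨅ u : {u : V → ℝ // ∀ x, 0 < u x},
      ∑ x, μ x * (gen R (↑u) x / (↑u : V → ℝ) x) :=
    le_ciInf fun u => lower u u.2
  have : (⨅ u : {u : V → ℝ // ∀ x, 0 < u x},
      ∑ x, μ x * (gen R (↑u) x / (↑u : V → ℝ) x)) = -E := le_antisymm hle hge
  rw [this, neg_neg, hE]
end
end

section
/- Let (I_n) be a sequence of functionals I_n : P(V) → [0,∞] on probability measures on a finite set V, given by I_n(μ) = sup_{u>0} −Σ_{x} (μ(x)/u(x)) Σ_y R_n(x,y)(u(y)−u(x)), where R_n(x,y) → ℝ_0(x,y) for all x,y. Define I^{(0)}(μ) = sup_{u>0} −Σ_x (μ(x)/u(x)) Σ_y ℝ_0(x,y)(u(y)−u(x)). Then I^{(0)} is a Γ-liminf for the sequence I_n: for every μ ∈ P(V) and every sequence μ_n → μ, liminf_n I_n(μ_n) ≥ I^{(0)}(μ). -/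
open Finset Filter Topology

noncomputable section

/-- The level-two large deviations rate function of the chain with rates `R`:
`I(μ) = sup_{u>0} −∑_x (μ(x)/u(x)) ∑_y R(x,y)(u(y)−u(x))`. -/
def rateFun {V : Type*} [Fintype V] (R : V → V → ℝ) (μ : V → ℝ) : ℝ :=
  ⨆ u : {u : V → ℝ // ∀ x, 0 < u x},
    -(∑ x, (μ x / (↑u : V → ℝ) x) * ∑ y, R x y * ((↑u : V → ℝ) y - (↑u : V → ℝ) x))

lemma rate_term_le {V : Type*} [Fintype V] (R : V → V → ℝ) (hR : ∀ x y, 0 ≤ R x y)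
    (μ : V → ℝ) (hμ : ∀ x, 0 ≤ μ x) (hμ1 : ∑ x, μ x = 1)
    (u : {u : V → ℝ // ∀ x, 0 < u x}) :
    -(∑ x, (μ x / (↑u : V → ℝ) x) * ∑ y, R x y * ((↑u : V → ℝ) y - (↑u : V → ℝ) x))
      ≤ ∑ x, ∑ y, R x y := by
  have hμle : ∀ x, μ x ≤ 1 := by
    intro x
    calc μ x ≤ ∑ z, μ z := Finset.single_le_sum (fun z _ => hμ z) (Finset.mem_univ x)
    _ = 1 := hμ1
  have heq : -(∑ x, (μ x / u.1 x) * ∑ y, R x y * (u.1 y - u.1 x))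
      = ∑ x, ∑ y, (μ x / u.1 x) * (R x y * (u.1 x - u.1 y)) := by
    rw [← Finset.sum_neg_distrib]
    congr 1; ext x
    rw [Finset.mul_sum, ← Finset.sum_neg_distrib]
    congr 1; ext y; ring
  rw [heq]
  apply Finset.sum_le_sum
  intro x _
  apply Finset.sum_le_sum
  intro y _
  have hux := u.2 x
  have huy := u.2 y
  have h1 : (μ x / u.1 x) * (R x y * (u.1 x - u.1 y)) ≤ (μ x / u.1 x) * (R x y * u.1 x) := by
    apply mul_le_mul_of_nonneg_left _ (div_nonneg (hμ x) hux.le)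
    apply mul_le_mul_of_nonneg_left _ (hR x y)
    linarith
  calc (μ x / u.1 x) * (R x y * (u.1 x - u.1 y)) ≤ (μ x / u.1 x) * (R x y * u.1 x) := h1
  _ = μ x * R x y := by field_simp
  _ ≤ 1 * R x y := mul_le_mul_of_nonneg_right (hμle x) (hR x y)
  _ = R x y := one_mul _

lemma rate_bdd {V : Type*} [Fintype V] (R : V → V → ℝ) (hR : ∀ x y, 0 ≤ R x y)
    (μ : V → ℝ) (hμ : ∀ x, 0 ≤ μ x) (hμ1 : ∑ x, μ x = 1) :
    BddAbove (Set.range fun u : {u : V → ℝ // ∀ x, 0 < u x} =>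
      -(∑ x, (μ x / (↑u : V → ℝ) x) * ∑ y, R x y * ((↑u : V → ℝ) y - (↑u : V → ℝ) x))) := by
  refine ⟨∑ x, ∑ y, R x y, ?_⟩
  rintro _ ⟨u, rfl⟩
  exact rate_term_le R hR μ hμ hμ1 u

lemma rate_le {V : Type*} [Fintype V] (R : V → V → ℝ) (hR : ∀ x y, 0 ≤ R x y)
    (μ : V → ℝ) (hμ : ∀ x, 0 ≤ μ x) (hμ1 : ∑ x, μ x = 1) :
    rateFun R μ ≤ ∑ x, ∑ y, R x y := by
  haveI : Nonempty {u : V → ℝ // ∀ x, 0 < u x} := ⟨⟨fun _ => 1, fun _ => one_pos⟩⟩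
  exact ciSup_le (rate_term_le R hR μ hμ hμ1)

/-- Γ-liminf: with `Rn → R0` pointwise and `μn → μ` in `P(V)`,
`liminf_n I_n(μ_n) ≥ I⁰(μ)`. -/
theorem stmt14 {V : Type*} [Fintype V]
    (Rn : ℕ → V → V → ℝ) (R0 : V → V → ℝ)
    (hRnn : ∀ n x y, 0 ≤ Rn n x y)
    (hlim : ∀ x y, Tendsto (fun n => Rn n x y) atTop (𝓝 (R0 x y)))
    (μn : ℕ → V → ℝ) (μ : V → ℝ)
    (hμn : ∀ n x, 0 ≤ μn n x) (hμn1 : ∀ n, ∑ x, μn n x = 1)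
    (hμ : ∀ x, 0 ≤ μ x) (hμ1 : ∑ x, μ x = 1)
    (hconv : ∀ x, Tendsto (fun n => μn n x) atTop (𝓝 (μ x))) :
    rateFun R0 μ ≤ Filter.liminf (fun n => rateFun (Rn n) (μn n)) atTop := by
  haveI : Nonempty {u : V → ℝ // ∀ x, 0 < u x} := ⟨⟨fun _ => 1, fun _ => one_pos⟩⟩
  apply ciSup_le
  intro u
  set F : (V → V → ℝ) → (V → ℝ) → ℝ := fun R ν =>
    -(∑ x, (ν x / u.1 x) * ∑ y, R x y * (u.1 y - u.1 x)) with hF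
  have htend : Tendsto (fun n => F (Rn n) (μn n)) atTop (𝓝 (F R0 μ)) := by
    apply Tendsto.neg
    apply tendsto_finset_sum
    intro x _
    apply Tendsto.mul ((hconv x).div_const _)
    apply tendsto_finset_sum
    intro y _
    exact (hlim x y).mul_const _
  have hle : ∀ n, F (Rn n) (μn n) ≤ rateFun (Rn n) (μn n) := fun n =>
    le_ciSup (rate_bdd (Rn n) (hRnn n) (μn n) (hμn n) (hμn1 n)) u
  have hC : Tendsto (fun n => ∑ x, ∑ y, Rn n x y) atTop (𝓝 (∑ x, ∑ y, R0 x y)) := by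
    apply tendsto_finset_sum
    intro x _
    exact tendsto_finset_sum _ fun y _ => hlim x y
  have hub : ∀ᶠ n in atTop, rateFun (Rn n) (μn n) ≤ (∑ x, ∑ y, R0 x y) + 1 := by
    filter_upwards [hC.eventually (eventually_le_nhds (lt_add_one _))] with n hn
    exact (rate_le (Rn n) (hRnn n) (μn n) (hμn n) (hμn1 n)).trans hn
  have hcob : IsCoboundedUnder (· ≥ ·) atTop (fun n => rateFun (Rn n) (μn n)) :=
    IsBoundedUnder.isCoboundedUnder_ge ⟨_, hub⟩
  calc F R0 μ = liminf (fun n => F (Rn n) (μn n)) atTop := htend.liminf_eq.symm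
  _ ≤ liminf (fun n => rateFun (Rn n) (μn n)) atTop :=
      liminf_le_liminf (Filter.Eventually.of_forall hle)
        htend.isBoundedUnder_ge hcob
end
end

section
/- Let 𝕏_t be a continuous-time Markov chain on a finite set V with generator L^{(0)} (not necessarily irreducible), reversible with respect to positive measures on each of its closed irreducible classes V_1,…,V_𝔫 with stationary states π^{(1)}_1,…,π^{(1)}_𝔫. Define I^{(0)}(μ) = −inf_{u>0} Σ_x μ(x)(L^{(0)}u)(x)/u(x). Then I^{(0)}(μ) = 0 if and only if μ is a convex combination of the measures π^{(1)}_j, i.e., μ = Σ_j ω_j π^{(1)}_j for some probability vector (ω_j). -/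
open Finset Filter Topology

noncomputable section

lemma aux_lb {V : Type*} [Fintype V] (R : V → V → ℝ) (hR : ∀ x y, 0 ≤ R x y)
    (μ : V → ℝ) (hμ : ∀ x, 0 ≤ μ x) (u : V → ℝ) (hu : ∀ x, 0 < u x) :
    -(∑ x, μ x * ∑ y, R x y) ≤ ∑ x, μ x * (gen R u x / u x) := by
  have h1 : ∀ x, -(∑ y, R x y) ≤ gen R u x / u x := by
    intro x
    rw [le_div_iff₀ (hu x)]
    unfold gen
    rw [neg_mul, Finset.sum_mul, ← Finset.sum_neg_distrib]
    apply Finset.sum_le_sum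
    intro y _
    have h2 := mul_nonneg (hR x y) (hu y).le
    nlinarith [hR x y, hu x, hu y]
  calc -(∑ x, μ x * ∑ y, R x y) = ∑ x, μ x * -(∑ y, R x y) := by
        simp [mul_neg, Finset.mul_sum]
      _ ≤ ∑ x, μ x * (gen R u x / u x) :=
        Finset.sum_le_sum fun x _ => mul_le_mul_of_nonneg_left (h1 x) (hμ x)

lemma aux_flow {V : Type*} [Fintype V] [DecidableEq V] (R : V → V → ℝ)
    (hR : ∀ x y, 0 ≤ R x y) (μ : V → ℝ) (hμ : ∀ x, 0 ≤ μ x)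
    (hstat : ∀ y, ∑ x, μ x * R x y = μ y * ∑ z, R y z)
    (A : Finset V) (hA : ∀ x y, 0 < R x y → y ∈ A → x ∈ A) :
    ∀ y ∈ A, ∀ z, z ∉ A → μ y * R y z = 0 := by
  have key : ∑ y ∈ A, ∑ x, μ x * R x y = ∑ y ∈ A, μ y * ∑ z, R y z :=
    Finset.sum_congr rfl fun y _ => hstat y
  have hL : ∀ y ∈ A, ∑ x, μ x * R x y = ∑ x ∈ A, μ x * R x y := by
    intro y hy
    refine (Finset.sum_subset (Finset.subset_univ A) ?_).symm
    intro x _ hx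
    have : R x y = 0 := by
      by_contra hc
      exact hx (hA x y (lt_of_le_of_ne (hR x y) (Ne.symm hc)) hy)
    simp [this]
  have hR' : ∀ y ∈ A, μ y * ∑ z, R y z
      = ∑ z ∈ A, μ y * R y z + ∑ z ∈ Aᶜ, μ y * R y z := by
    intro y _
    rw [Finset.sum_add_sum_compl, Finset.mul_sum]
  have key2 : ∑ y ∈ A, ∑ z ∈ Aᶜ, μ y * R y z = 0 := by
    have e1 : ∑ y ∈ A, ∑ x ∈ A, μ x * R x y = ∑ y ∈ A, ∑ z ∈ A, μ y * R y z :=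
      Finset.sum_comm
    have := key
    rw [Finset.sum_congr rfl hL, Finset.sum_congr rfl hR', Finset.sum_add_distrib, e1] at this
    linarith
  intro y hy z hz
  have h1 := (Finset.sum_eq_zero_iff_of_nonneg (fun i hi =>
    Finset.sum_nonneg fun j _ => mul_nonneg (hμ i) (hR i j))).mp key2 y hy
  exact (Finset.sum_eq_zero_iff_of_nonneg (fun j _ => mul_nonneg (hμ y) (hR y j))).mp
    h1 z (Finset.mem_compl.mpr hz)

lemma aux_const {V : Type*} [Fintype V] (R : V → V → ℝ) (hR : ∀ x y, 0 ≤ R x y)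
    (W : Finset V) (hWne : W.Nonempty) (h : V → ℝ)
    (hharm : ∀ y ∈ W, ∑ x ∈ W, R y x * h x = h y * ∑ x ∈ W, R y x)
    (hirr : ∀ a ∈ W, ∀ b ∈ W,
      Relation.ReflTransGen (fun u v => u ∈ W ∧ v ∈ W ∧ 0 < R u v) a b) :
    ∀ a ∈ W, ∀ b ∈ W, h a = h b := by
  obtain ⟨m, hm, hmax⟩ := W.exists_max_image h hWne
  have step : ∀ a, a ∈ W → h a = h m → ∀ b, b ∈ W → 0 < R a b → h b = h m := by
    intro a ha hha b hb hab
    have hsum : ∑ x ∈ W, R a x * (h m - h x) = 0 := by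
      have h2 := hharm a ha
      rw [Finset.mul_sum] at h2
      have e : ∑ x ∈ W, R a x * (h m - h x)
          = ∑ x ∈ W, h a * R a x - ∑ x ∈ W, R a x * h x := by
        rw [← Finset.sum_sub_distrib]
        exact Finset.sum_congr rfl fun x _ => by rw [← hha]; ring
      rw [e, h2]
      simp [mul_comm]
    have := (Finset.sum_eq_zero_iff_of_nonneg (fun x hx =>
      mul_nonneg (hR a x) (by linarith [hmax x hx]))).mp hsum b hb
    have hne : R a b ≠ 0 := ne_of_gt hab
    have : h m - h b = 0 := by
      rcases mul_eq_zero.mp this with hc | hc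
      · exact absurd hc hne
      · exact hc
    linarith
  have prop : ∀ b, Relation.ReflTransGen (fun u v => u ∈ W ∧ v ∈ W ∧ 0 < R u v) m b
      → h b = h m := by
    intro b hb
    induction hb with
    | refl => rfl
    | tail _ hstep ih => exact step _ hstep.1 ih _ hstep.2.1 hstep.2.2
  intro a ha b hb
  rw [prop a (hirr _ hm _ ha), prop b (hirr _ hm _ hb)]

lemma aux_stat {V : Type*} [Fintype V] [DecidableEq V] (R : V → V → ℝ)
    (hR : ∀ x y, 0 ≤ R x y) (μ : V → ℝ) (hμ : ∀ x, 0 ≤ μ x)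
    (hF : ∀ u : V → ℝ, (∀ x, 0 < u x) → 0 ≤ ∑ x, μ x * (gen R u x / u x)) :
    ∀ y, ∑ x, μ x * R x y = μ y * ∑ z, R y z := by
  intro y0
  set A := ∑ x ∈ Finset.univ.erase y0, μ x * R x y0 with hAdef
  set B := μ y0 * ∑ z ∈ Finset.univ.erase y0, R y0 z with hBdef
  have hA0 : 0 ≤ A := Finset.sum_nonneg fun x _ => mul_nonneg (hμ x) (hR x y0)
  have hB0 : 0 ≤ B := mul_nonneg (hμ y0)
    (Finset.sum_nonneg fun z _ => hR y0 z)
  have hFt : ∀ t : ℝ, -1 < t →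
      0 ≤ t * A - (t / (1 + t)) * B := by
    intro t ht
    set u : V → ℝ := fun w => if w = y0 then 1 + t else 1 with hudef
    have hu : ∀ x, 0 < u x := by
      intro x
      by_cases hx : x = y0 <;> simp [hudef, hx] <;> linarith
    have hgen0 : gen R u y0 = -t * ∑ z ∈ Finset.univ.erase y0, R y0 z := by
      unfold gen
      rw [← Finset.add_sum_erase _ _ (Finset.mem_univ y0)]
      have e0 : R y0 y0 * (u y0 - u y0) = 0 := by ring
      rw [e0, zero_add, Finset.mul_sum]
      apply Finset.sum_congr rfl
      intro z hz
      have hz' : z ≠ y0 := Finset.ne_of_mem_erase hz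
      simp [hudef, hz']
      ring
    have hgenx : ∀ x, x ≠ y0 → gen R u x = R x y0 * t := by
      intro x hx
      unfold gen
      rw [Finset.sum_eq_single y0]
      · simp [hudef, hx]
      · intro b _ hb
        simp [hudef, hb, hx]
      · intro hy0; exact absurd (Finset.mem_univ y0) hy0
    have hval : ∑ x, μ x * (gen R u x / u x) = t * A - (t / (1 + t)) * B := by
      rw [← Finset.add_sum_erase _ _ (Finset.mem_univ y0)]
      have e1 : μ y0 * (gen R u y0 / u y0)
          = -((t / (1 + t)) * B) := by
        rw [hgen0]
        have : u y0 = 1 + t := by simp [hudef]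
        rw [this, hBdef]
        field_simp
      have e2 : ∑ x ∈ Finset.univ.erase y0, μ x * (gen R u x / u x)
          = t * A := by
        rw [hAdef, Finset.mul_sum]
        apply Finset.sum_congr rfl
        intro x hx
        have hx' : x ≠ y0 := Finset.ne_of_mem_erase hx
        rw [hgenx x hx']
        have : u x = 1 := by simp [hudef, hx']
        rw [this]
        ring
      rw [e1, e2]; ring
    have := hF u hu
    rw [hval] at this
    exact this
  have h1 : ∀ t : ℝ, 0 < t → B ≤ A * (1 + t) := by
    intro t ht
    have h1t : (0:ℝ) < 1 + t := by linarith
    have hs : 0 < t / (1 + t) := div_pos ht h1t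
    have hkey := hFt t (by linarith)
    have ht' : t = (t / (1 + t)) * (1 + t) := by field_simp
    have : (t / (1 + t)) * B ≤ (t / (1 + t)) * ((1 + t) * A) := by
      nlinarith [hkey]
    have := (mul_le_mul_iff_right₀ hs).mp this
    linarith [this]
  have h2 : ∀ t : ℝ, -1 < t → t < 0 → A * (1 + t) ≤ B := by
    intro t ht ht0
    have h1t : (0:ℝ) < 1 + t := by linarith
    have hs : t / (1 + t) < 0 := div_neg_of_neg_of_pos ht0 h1t
    have hkey := hFt t ht
    have ht' : t = (t / (1 + t)) * (1 + t) := by field_simp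
    nlinarith [hkey, hs]
  have hBA : B ≤ A := by
    apply le_of_forall_pos_le_add
    intro ε hε
    have hA1 : (0:ℝ) < A + 1 := by linarith
    have := h1 (ε / (A + 1)) (div_pos hε hA1)
    have h3 : A * (ε / (A + 1)) ≤ ε := by
      rw [mul_div_assoc']
      rw [div_le_iff₀ hA1]
      nlinarith
    nlinarith
  have hAB : A ≤ B := by
    apply le_of_forall_pos_le_add
    intro ε hε
    have hA1 : (0:ℝ) < A + 1 := by linarith
    set t : ℝ := -min (1/2) (ε / (A + 1)) with htdef
    have hmpos : 0 < min (1/2) (ε / (A + 1)) :=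
      lt_min (by norm_num) (div_pos hε hA1)
    have ht1 : -1 < t := by
      have : min (1/2) (ε / (A + 1)) ≤ 1/2 := min_le_left _ _
      rw [htdef]; linarith
    have ht0 : t < 0 := by rw [htdef]; linarith
    have := h2 t ht1 ht0
    have h4 : A * (-t) ≤ ε := by
      have h5 : -t ≤ ε / (A + 1) := by rw [htdef]; simp [min_le_right]
      have h6 : A * (-t) ≤ A * (ε / (A + 1)) :=
        mul_le_mul_of_nonneg_left h5 hA0
      have h7 : A * (ε / (A + 1)) ≤ ε := by
        rw [mul_div_assoc', div_le_iff₀ hA1]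
        nlinarith
      exact le_trans h6 h7
    nlinarith
  have hABeq : A = B := le_antisymm hAB hBA
  have eL : ∑ x, μ x * R x y0 = μ y0 * R y0 y0 + A := by
    rw [hAdef, ← Finset.add_sum_erase _ _ (Finset.mem_univ y0)]
  have eR : μ y0 * ∑ z, R y0 z = μ y0 * R y0 y0 + B := by
    rw [hBdef, ← Finset.add_sum_erase _ _ (Finset.mem_univ y0), mul_add]
  rw [eL, eR, hABeq]

/-- for a (not necessarily irreducible) chain on `V` with generator `L⁰`,
reversible on each of its closed irreducible classes `Vc j` with stationary states
`πs j`, the functional `I⁰(μ) = −inf_{u>0} ∑_x μ(x)(L⁰u)(x)/u(x)` vanishes if and only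
if `μ` is a convex combination of the measures `πs j`. -/
theorem stmt15 {V : Type*} [Fintype V] [Nonempty V] {J : Type*} [Fintype J]
    (R0 : V → V → ℝ) (hR0 : ∀ x y, 0 ≤ R0 x y)
    (Vc : J → Finset V) (hVcne : ∀ j, (Vc j).Nonempty)
    (hVcdisj : ∀ j k, j ≠ k → Disjoint (Vc j) (Vc k))
    (hclosed : ∀ j, ∀ a ∈ Vc j, ∀ b, b ∉ Vc j → R0 a b = 0)
    (hclassirr : ∀ j, ∀ a ∈ Vc j, ∀ b ∈ Vc j,
      Relation.ReflTransGen (fun u v => u ∈ Vc j ∧ v ∈ Vc j ∧ 0 < R0 u v) a b)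
    -- states outside the classes are transient:
    (htrans : ∀ y : V, (∀ j, y ∉ Vc j) →
      ∃ z, Relation.ReflTransGen (fun u v => 0 < R0 u v) y z ∧
        ¬ Relation.ReflTransGen (fun u v => 0 < R0 u v) z y)
    -- `πs j` is the stationary state on `Vc j`, and the restricted chain is reversible:
    (πs : J → V → ℝ)
    (hπs0 : ∀ j x, x ∉ Vc j → πs j x = 0)
    (hπspos : ∀ j, ∀ x ∈ Vc j, 0 < πs j x)
    (hπs1 : ∀ j, ∑ x ∈ Vc j, πs j x = 1)
    (hπsrev : ∀ j, ∀ x ∈ Vc j, ∀ y ∈ Vc j, πs j x * R0 x y = πs j y * R0 y x)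
    (μ : V → ℝ) (hμ : ∀ x, 0 ≤ μ x) (hμ1 : ∑ x, μ x = 1) :
    -(⨅ u : {u : V → ℝ // ∀ x, 0 < u x},
        ∑ x, μ x * (gen R0 (↑u) x / (↑u : V → ℝ) x)) = 0
      ↔ ∃ ω : J → ℝ, (∀ j, 0 ≤ ω j) ∧ (∑ j, ω j = 1) ∧
          ∀ x, μ x = ∑ j, ω j * πs j x := by
  classical
  haveI : Nonempty {u : V → ℝ // ∀ x, 0 < u x} := ⟨⟨fun _ => 1, fun _ => one_pos⟩⟩
  have hbdd : BddBelow (Set.range fun u : {u : V → ℝ // ∀ x, 0 < u x} =>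
      ∑ x, μ x * (gen R0 (↑u) x / (↑u : V → ℝ) x)) := by
    refine ⟨-(∑ x, μ x * ∑ y, R0 x y), ?_⟩
    rintro v ⟨⟨u, hu⟩, rfl⟩
    exact aux_lb R0 hR0 μ hμ u hu
  rw [neg_eq_zero]
  constructor
  · intro hinf
    have hF : ∀ u : V → ℝ, (∀ x, 0 < u x) →
        0 ≤ ∑ x, μ x * (gen R0 u x / u x) := by
      intro u hu
      have h := ciInf_le hbdd (⟨u, hu⟩ : {u : V → ℝ // ∀ x, 0 < u x})
      rw [hinf] at h
      exact h
    have hstat := aux_stat R0 hR0 μ hμ hF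
    have hstep : ∀ a b, 0 < μ a → 0 < R0 a b → 0 < μ b := by
      intro a b ha hab
      rcases (hμ b).lt_or_eq with h | h
      · exact h
      · exfalso
        have h0 : ∑ x, μ x * R0 x b = 0 := by rw [hstat b, ← h, zero_mul]
        have := (Finset.sum_eq_zero_iff_of_nonneg
          (fun x _ => mul_nonneg (hμ x) (hR0 x b))).mp h0 a (Finset.mem_univ a)
        nlinarith
    have htrans0 : ∀ y, (∀ j, y ∉ Vc j) → μ y = 0 := by
      intro y hy
      by_contra hne
      have hypos : 0 < μ y := lt_of_le_of_ne (hμ y) (Ne.symm hne)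
      obtain ⟨z, hyz, hzy⟩ := htrans y hy
      set A : Finset V := Finset.univ.filter
        (fun w => Relation.ReflTransGen (fun a b => 0 < R0 a b) w y) with hAdef
      have hAmem : ∀ w, w ∈ A ↔
          Relation.ReflTransGen (fun a b => 0 < R0 a b) w y := by
        intro w; simp [hAdef]
      have hAcl : ∀ x w, 0 < R0 x w → w ∈ A → x ∈ A := by
        intro x w hxw hw
        exact (hAmem x).mpr (Relation.ReflTransGen.head hxw ((hAmem w).mp hw))
      have hflow := aux_flow R0 hR0 μ hμ hstat A hAcl
      have key : ∀ w, Relation.ReflTransGen (fun a b => 0 < R0 a b) w z →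
          w ∈ A → 0 < μ w → False := by
        intro w hwz
        induction hwz using Relation.ReflTransGen.head_induction_on with
        | refl => intro hzA _; exact hzy ((hAmem z).mp hzA)
        | @head a c hac hcz ih =>
          intro haA haμ
          by_cases hcA : c ∈ A
          · exact ih hcA (hstep a c haμ hac)
          · have h0 := hflow a haA c hcA
            nlinarith
      exact key y hyz ((hAmem y).mpr Relation.ReflTransGen.refl) hypos
    have hclassμ : ∀ j, ∃ c : ℝ, 0 ≤ c ∧ ∀ x ∈ Vc j, μ x = c * πs j x := by
      intro j
      set h : V → ℝ := fun x => μ x / πs j x with hhdef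
      have hμeq : ∀ x ∈ Vc j, μ x = h x * πs j x := by
        intro x hx
        rw [hhdef]
        exact (div_mul_cancel₀ _ (ne_of_gt (hπspos j x hx))).symm
      have hharm : ∀ y ∈ Vc j,
          ∑ x ∈ Vc j, R0 y x * h x = h y * ∑ x ∈ Vc j, R0 y x := by
        intro y hy
        have hst := hstat y
        have eL : ∑ x, μ x * R0 x y = ∑ x ∈ Vc j, μ x * R0 x y := by
          symm
          apply Finset.sum_subset (Finset.subset_univ _)
          intro x _ hx
          by_cases hxk : ∃ k, x ∈ Vc k
          · obtain ⟨k, hk⟩ := hxk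
            have hkj : k ≠ j := fun he => hx (he ▸ hk)
            have hyk : y ∉ Vc k := fun hyk =>
              Finset.disjoint_left.mp (hVcdisj k j hkj) hyk hy
            rw [hclosed k x hk y hyk, mul_zero]
          · push_neg at hxk
            rw [htrans0 x hxk, zero_mul]
        have eR : ∑ z, R0 y z = ∑ z ∈ Vc j, R0 y z := by
          symm
          apply Finset.sum_subset (Finset.subset_univ _)
          intro z _ hz
          exact hclosed j y hy z hz
        rw [eL, eR] at hst
        have e2 : ∑ x ∈ Vc j, μ x * R0 x y
            = πs j y * ∑ x ∈ Vc j, R0 y x * h x := by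
          rw [Finset.mul_sum]
          apply Finset.sum_congr rfl
          intro x hx
          rw [hμeq x hx]
          have hrev := hπsrev j x hx y hy
          calc h x * πs j x * R0 x y = h x * (πs j x * R0 x y) := by ring
            _ = h x * (πs j y * R0 y x) := by rw [hrev]
            _ = πs j y * (R0 y x * h x) := by ring
        have e3 : μ y * ∑ z ∈ Vc j, R0 y z
            = πs j y * (h y * ∑ x ∈ Vc j, R0 y x) := by
          rw [hμeq y hy]; ring
        rw [e2, e3] at hst
        exact mul_left_cancel₀ (ne_of_gt (hπspos j y hy)) hst
      have hconst := aux_const R0 hR0 (Vc j) (hVcne j) h hharm (hclassirr j)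
      obtain ⟨x0, hx0⟩ := hVcne j
      refine ⟨h x0, ?_, ?_⟩
      · rw [hhdef]
        exact div_nonneg (hμ x0) (hπspos j x0 hx0).le
      · intro x hx
        rw [hμeq x hx, hconst x hx x0 hx0]
    choose c hc0 hcμ using hclassμ
    have hpt : ∀ x, μ x = ∑ j, c j * πs j x := by
      intro x
      by_cases hx : ∃ j, x ∈ Vc j
      · obtain ⟨j0, hj0⟩ := hx
        rw [Finset.sum_eq_single j0]
        · exact hcμ j0 x hj0
        · intro k _ hk
          have hxk : x ∉ Vc k := fun hxk =>
            Finset.disjoint_left.mp (hVcdisj k j0 hk) hxk hj0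
          rw [hπs0 k x hxk, mul_zero]
        · intro hj; exact absurd (Finset.mem_univ j0) hj
      · push_neg at hx
        rw [htrans0 x hx]
        symm
        apply Finset.sum_eq_zero
        intro j _
        rw [hπs0 j x (hx j), mul_zero]
    have hsum1 : ∑ j, c j = 1 := by
      have e1 : ∀ j, ∑ x, πs j x = 1 := by
        intro j
        rw [← hπs1 j]
        exact (Finset.sum_subset (Finset.subset_univ _)
          (fun x _ hx => hπs0 j x hx)).symm
      calc ∑ j, c j = ∑ j, c j * ∑ x, πs j x := by
            apply Finset.sum_congr rfl; intro j _; rw [e1 j, mul_one]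
        _ = ∑ j, ∑ x, c j * πs j x := by
            apply Finset.sum_congr rfl; intro j _; rw [Finset.mul_sum]
        _ = ∑ x, ∑ j, c j * πs j x := Finset.sum_comm
        _ = ∑ x, μ x := by
            apply Finset.sum_congr rfl; intro x _; rw [← hpt x]
        _ = 1 := hμ1
    exact ⟨c, hc0, hsum1, hpt⟩
  · rintro ⟨ω, hω0, hω1, hωμ⟩
    apply le_antisymm
    · have h1 := ciInf_le hbdd
        (⟨fun _ => 1, fun _ => one_pos⟩ : {u : V → ℝ // ∀ x, 0 < u x})
      simpa [gen] using h1
    · apply le_ciInf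
      rintro ⟨u, hu⟩
      show 0 ≤ ∑ x, μ x * (gen R0 u x / u x)
      have hGj : ∀ j, 0 ≤ ∑ x, πs j x * (gen R0 u x / u x) := by
        intro j
        have e1 : ∑ x, πs j x * (gen R0 u x / u x)
            = ∑ x ∈ Vc j, πs j x * (gen R0 u x / u x) := by
          symm
          apply Finset.sum_subset (Finset.subset_univ _)
          intro x _ hx
          rw [hπs0 j x hx, zero_mul]
        set g : V → V → ℝ :=
          fun x y => πs j x * (R0 x y * (u y - u x) / u x) with hgdef
        have e2 : ∀ x ∈ Vc j, πs j x * (gen R0 u x / u x)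
            = ∑ y ∈ Vc j, g x y := by
          intro x hx
          have egen : gen R0 u x = ∑ y ∈ Vc j, R0 x y * (u y - u x) := by
            symm
            apply Finset.sum_subset (Finset.subset_univ _)
            intro z _ hz
            rw [hclosed j x hx z hz, zero_mul]
          rw [egen, Finset.sum_div, Finset.mul_sum]
        have e3 : ∑ x ∈ Vc j, πs j x * (gen R0 u x / u x)
            = ∑ x ∈ Vc j, ∑ y ∈ Vc j, g x y :=
          Finset.sum_congr rfl e2
        have hdouble : 0 ≤ ∑ x ∈ Vc j, ∑ y ∈ Vc j, g x y := by
          have hsym : ∑ x ∈ Vc j, ∑ y ∈ Vc j, g x y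
              = ∑ x ∈ Vc j, ∑ y ∈ Vc j, g y x := Finset.sum_comm
          have h2 : (2:ℝ) * ∑ x ∈ Vc j, ∑ y ∈ Vc j, g x y
              = ∑ x ∈ Vc j, ∑ y ∈ Vc j, (g x y + g y x) := by
            rw [two_mul]
            nth_rewrite 2 [hsym]
            rw [← Finset.sum_add_distrib]
            apply Finset.sum_congr rfl
            intro x _
            rw [← Finset.sum_add_distrib]
          have hterm : ∀ x ∈ Vc j, ∀ y ∈ Vc j, 0 ≤ g x y + g y x := by
            intro x hx y hy
            have hrev := hπsrev j y hy x hx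
            have hux := hu x
            have huy := hu y
            have efrac : (u y - u x) / u x + (u x - u y) / u y
                = (u y - u x) ^ 2 / (u x * u y) := by
              field_simp
              ring
            have : g x y + g y x
                = πs j x * R0 x y * ((u y - u x) / u x + (u x - u y) / u y) := by
              rw [hgdef]
              simp only []
              calc πs j x * (R0 x y * (u y - u x) / u x)
                    + πs j y * (R0 y x * (u x - u y) / u y)
                  = πs j x * R0 x y * ((u y - u x) / u x)
                    + (πs j y * R0 y x) * ((u x - u y) / u y) := by ring
                _ = πs j x * R0 x y * ((u y - u x) / u x)
                    + (πs j x * R0 x y) * ((u x - u y) / u y) := by rw [hrev]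
                _ = πs j x * R0 x y * ((u y - u x) / u x + (u x - u y) / u y) := by
                    ring
            rw [this, efrac]
            apply mul_nonneg (mul_nonneg (hπspos j x hx).le (hR0 x y))
            positivity
          nlinarith [Finset.sum_nonneg fun x hx =>
            Finset.sum_nonneg fun y hy => hterm x hx y hy, h2]
        rw [e1, e3]
        exact hdouble
      have hsplit : ∑ x, μ x * (gen R0 u x / u x)
          = ∑ j, ω j * ∑ x, πs j x * (gen R0 u x / u x) := by
        calc ∑ x, μ x * (gen R0 u x / u x)
            = ∑ x, ∑ j, ω j * (πs j x * (gen R0 u x / u x)) := by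
              apply Finset.sum_congr rfl
              intro x _
              rw [hωμ x, Finset.sum_mul]
              apply Finset.sum_congr rfl
              intro j _
              ring
          _ = ∑ j, ∑ x, ω j * (πs j x * (gen R0 u x / u x)) := Finset.sum_comm
          _ = ∑ j, ω j * ∑ x, πs j x * (gen R0 u x / u x) := by
              apply Finset.sum_congr rfl
              intro j _
              rw [Finset.mul_sum]
      rw [hsplit]
      exact Finset.sum_nonneg fun j _ => mul_nonneg (hω0 j) (hGj j)
end
end
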